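/- arXiv:1804.02711 — 2 statements merged into one kernel-verified Lean document; each statement's English description precedes it below -/
import Mathlib

section
/- A symmetric r × r polynomial matrix P(x) in variables x = (x_1, ..., x_n) is an SOS matrix if and only if the scalar polynomial y^T P(x) y, viewed as a polynomial in the n + r variables (x_1, ..., x_n, y_1, ..., y_r), is a sum of squares of polynomials. -/
open MvPolynomial Finsupp

noncomputable section SOSAux

/-- Sum of squares of real polynomials is zero iff each is zero. -/
lemma sos_eq_zero {σ : Type*} {s : ℕ} (f : Fin s → MvPolynomial σ ℝ)
    (h : ∑ i, f i ^ 2 = 0) (i : Fin s) : f i = 0 := by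
  apply MvPolynomial.funext
  intro x
  have h1 : ∑ j, (MvPolynomial.eval x (f j)) ^ 2 = 0 := by
    have := congrArg (MvPolynomial.eval x) h
    simpa using this
  have h2 : ∀ j ∈ Finset.univ, (0:ℝ) ≤ (MvPolynomial.eval x (f j)) ^ 2 :=
    fun j _ => sq_nonneg _
  have := (Finset.sum_eq_zero_iff_of_nonneg h2).mp h1 i (Finset.mem_univ i)
  simpa [pow_eq_zero_iff] using this

lemma comp_mul_bot {σ : Type*} (w : σ → ℕ) (f g : MvPolynomial σ ℝ) :
    weightedHomogeneousComponent w 0 (f * g) =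
      weightedHomogeneousComponent w 0 f * weightedHomogeneousComponent w 0 g := by
  classical
  ext d
  rw [coeff_weightedHomogeneousComponent, MvPolynomial.coeff_mul, MvPolynomial.coeff_mul]
  by_cases hd : weight w d = 0
  · rw [if_pos hd]
    apply Finset.sum_congr rfl
    intro ab hab
    rw [Finset.HasAntidiagonal.mem_antidiagonal] at hab
    have hw : weight w ab.1 + weight w ab.2 = 0 := by
      rw [← map_add, hab, hd]
    rw [coeff_weightedHomogeneousComponent, coeff_weightedHomogeneousComponent,
      if_pos (Nat.eq_zero_of_add_eq_zero_right hw), if_pos (Nat.eq_zero_of_add_eq_zero_left hw)]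
  · rw [if_neg hd]
    apply (Finset.sum_eq_zero _).symm
    intro ab hab
    rw [Finset.HasAntidiagonal.mem_antidiagonal] at hab
    rw [coeff_weightedHomogeneousComponent, coeff_weightedHomogeneousComponent]
    by_cases h1 : weight w ab.1 = 0
    · by_cases h2 : weight w ab.2 = 0
      · exfalso; apply hd; rw [← hab, map_add, h1, h2]
      · rw [if_neg h2, mul_zero]
    · rw [if_neg h1, zero_mul]

lemma comp_mul_top {σ : Type*} (w : σ → ℕ) (D : ℕ) (f : MvPolynomial σ ℝ)
    (hf : ∀ d ∈ f.support, weight w d ≤ D) :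
    weightedHomogeneousComponent w (D + D) (f * f) =
      weightedHomogeneousComponent w D f * weightedHomogeneousComponent w D f := by
  classical
  ext d
  rw [coeff_weightedHomogeneousComponent, MvPolynomial.coeff_mul, MvPolynomial.coeff_mul]
  by_cases hd : weight w d = D + D
  · rw [if_pos hd]
    apply Finset.sum_congr rfl
    intro ab hab
    rw [Finset.HasAntidiagonal.mem_antidiagonal] at hab
    have hw : weight w ab.1 + weight w ab.2 = D + D := by rw [← map_add, hab, hd]
    rw [coeff_weightedHomogeneousComponent, coeff_weightedHomogeneousComponent]
    by_cases h1 : MvPolynomial.coeff ab.1 f = 0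
    · rw [h1, zero_mul]
      split_ifs with h' <;> simp [h1]
    by_cases h2 : MvPolynomial.coeff ab.2 f = 0
    · rw [h2, mul_zero]
      split_ifs with h' h'' <;> simp [h2]
    have hb1 : weight w ab.1 ≤ D := hf _ (MvPolynomial.mem_support_iff.mpr h1)
    have hb2 : weight w ab.2 ≤ D := hf _ (MvPolynomial.mem_support_iff.mpr h2)
    have e1 : weight w ab.1 = D := by omega
    have e2 : weight w ab.2 = D := by omega
    rw [if_pos e1, if_pos e2]
  · rw [if_neg hd]
    apply (Finset.sum_eq_zero _).symm
    intro ab hab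
    rw [Finset.HasAntidiagonal.mem_antidiagonal] at hab
    rw [coeff_weightedHomogeneousComponent, coeff_weightedHomogeneousComponent]
    by_cases h1 : weight w ab.1 = D
    · by_cases h2 : weight w ab.2 = D
      · exfalso; apply hd; rw [← hab, map_add, h1, h2]
      · rw [if_neg h2, mul_zero]
    · rw [if_neg h1, zero_mul]

end SOSAux

open MvPolynomial Finsupp

noncomputable section SOSAux2

variable {n r : ℕ}

def wSOS (n r : ℕ) : Fin n ⊕ Fin r → ℕ := Sum.elim (fun _ => 0) (fun _ => 1)

lemma weight_wSOS (d : Fin n ⊕ Fin r →₀ ℕ) :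
    weight (wSOS n r) d = ∑ j : Fin r, d (Sum.inr j) := by
  rw [Finsupp.weight_apply, Finsupp.sum_fintype]
  · rw [Fintype.sum_sum_type]
    simp [wSOS]
  · intro k; simp

lemma rename_inl_hom0 (p : MvPolynomial (Fin n) ℝ) :
    IsWeightedHomogeneous (wSOS n r) (rename Sum.inl p) 0 := by
  intro d hd
  obtain ⟨u, hu, -⟩ := coeff_rename_ne_zero _ _ _ hd
  rw [← hu, weight_wSOS]
  apply Finset.sum_eq_zero
  intro j _
  exact Finsupp.mapDomain_notin_range _ _ (by simp)

lemma Q_hom (P : Matrix (Fin r) (Fin r) (MvPolynomial (Fin n) ℝ)) :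
    IsWeightedHomogeneous (wSOS n r)
      (∑ i : Fin r, ∑ j : Fin r,
        MvPolynomial.X (Sum.inr i) * MvPolynomial.X (Sum.inr j) *
          MvPolynomial.rename Sum.inl (P i j)) 2 := by
  apply IsWeightedHomogeneous.sum
  intro i _
  apply IsWeightedHomogeneous.sum
  intro j _
  have h1 : IsWeightedHomogeneous (wSOS n r) (X (Sum.inr i) : MvPolynomial (Fin n ⊕ Fin r) ℝ) 1 := by
    simpa [wSOS] using isWeightedHomogeneous_X (R := ℝ) (wSOS n r) (Sum.inr i)
  have h2 : IsWeightedHomogeneous (wSOS n r) (X (Sum.inr j) : MvPolynomial (Fin n ⊕ Fin r) ℝ) 1 := by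
    simpa [wSOS] using isWeightedHomogeneous_X (R := ℝ) (wSOS n r) (Sum.inr j)
  have := ((h1.mul h2).mul (rename_inl_hom0 (P i j)))
  simpa using this

def extSOS (j : Fin r) : MvPolynomial (Fin n ⊕ Fin r) ℝ →ₐ[ℝ] MvPolynomial (Fin n) ℝ :=
  aeval (Sum.elim X (fun k => if k = j then 1 else 0))

lemma extSOS_rename (j : Fin r) (p : MvPolynomial (Fin n) ℝ) :
    extSOS j (rename Sum.inl p) = p := by
  rw [extSOS, aeval_rename]
  simpa using aeval_X_left_apply (R := ℝ) p

lemma mono_step (d : Fin n ⊕ Fin r →₀ ℕ) (c : ℝ) (hd : weight (wSOS n r) d = 1) :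
    (monomial d) c = ∑ j : Fin r, rename Sum.inl (extSOS j ((monomial d) c)) * X (Sum.inr j) := by
  classical
  rw [weight_wSOS] at hd
  have hex : ∃ j₀ : Fin r, d (Sum.inr j₀) ≠ 0 := by
    by_contra hco
    push_neg at hco
    rw [Finset.sum_eq_zero (fun j _ => hco j)] at hd
    exact one_ne_zero hd.symm
  obtain ⟨j₀, hj₀⟩ := hex
  have hsum := Finset.add_sum_erase Finset.univ (fun j => d (Sum.inr j)) (Finset.mem_univ j₀)
  rw [hd] at hsum
  have hsum' : d (Sum.inr j₀) + ∑ j ∈ Finset.univ.erase j₀, d (Sum.inr j) = 1 := by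
    simpa using hsum
  have hj1 : d (Sum.inr j₀) = 1 := by omega
  have hrest : ∑ j ∈ Finset.univ.erase j₀, d (Sum.inr j) = 0 := by omega
  have hz : ∀ j : Fin r, j ≠ j₀ → d (Sum.inr j) = 0 := by
    intro j hj
    exact (Finset.sum_eq_zero_iff).mp hrest j (Finset.mem_erase.mpr ⟨hj, Finset.mem_univ j⟩)
  set dx : Fin n →₀ ℕ := Finsupp.comapDomain Sum.inl d (Sum.inl_injective.injOn) with hdx
  have hsplit : d = Finsupp.mapDomain Sum.inl dx + Finsupp.single (Sum.inr j₀) 1 := by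
    ext k
    cases k with
    | inl i =>
        rw [Finsupp.add_apply, Finsupp.mapDomain_apply Sum.inl_injective,
          Finsupp.single_apply, if_neg (by simp)]
        simp [hdx]
    | inr j =>
        rw [Finsupp.add_apply, Finsupp.mapDomain_notin_range _ _ (by simp),
          Finsupp.single_apply, zero_add]
        by_cases hj : j = j₀
        · subst hj; simp [hj1]
        · rw [if_neg (by simpa using (Ne.symm hj)), hz j hj]
  have hmono : (monomial d) c = rename Sum.inl ((monomial dx) c) * X (Sum.inr j₀) := by
    rw [rename_monomial, X, monomial_mul, mul_one, ← hsplit]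
  have hext : ∀ j : Fin r, extSOS j ((monomial d) c)
      = if j = j₀ then (monomial dx) c else 0 := by
    intro j
    rw [hmono, map_mul, extSOS_rename]
    have : extSOS j (X (Sum.inr j₀) : MvPolynomial (Fin n ⊕ Fin r) ℝ)
        = if j₀ = j then 1 else 0 := by
      rw [extSOS, aeval_X]
      simp
    rw [this]
    by_cases hj : j = j₀
    · subst hj; simp
    · rw [if_neg (Ne.symm hj), if_neg hj, mul_zero]
  rw [Finset.sum_congr rfl (fun j _ => by rw [hext j])]
  rw [Finset.sum_eq_single j₀]
  · rw [if_pos rfl]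
    exact hmono
  · intro j _ hj
    rw [if_neg hj, map_zero, zero_mul]
  · intro h; exact absurd (Finset.mem_univ j₀) h

lemma decomp_linear (f : MvPolynomial (Fin n ⊕ Fin r) ℝ)
    (hf : IsWeightedHomogeneous (wSOS n r) f 1) :
    f = ∑ j : Fin r, rename Sum.inl (extSOS j f) * X (Sum.inr j) := by
  classical
  have key : ∀ v ∈ f.support, (monomial v) (coeff v f)
      = ∑ j : Fin r, rename Sum.inl (extSOS j ((monomial v) (coeff v f))) * X (Sum.inr j) := by
    intro v hv
    exact mono_step v (coeff v f) (hf (MvPolynomial.mem_support_iff.mp hv))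
  calc f = ∑ v ∈ f.support, (monomial v) (coeff v f) := (support_sum_monomial_coeff f).symm
    _ = ∑ v ∈ f.support, ∑ j : Fin r,
          rename Sum.inl (extSOS j ((monomial v) (coeff v f))) * X (Sum.inr j) :=
        Finset.sum_congr rfl key
    _ = ∑ j : Fin r, ∑ v ∈ f.support,
          rename Sum.inl (extSOS j ((monomial v) (coeff v f))) * X (Sum.inr j) :=
        Finset.sum_comm
    _ = ∑ j : Fin r, rename Sum.inl (extSOS j f) * X (Sum.inr j) := by
        apply Finset.sum_congr rfl
        intro j _
        rw [← Finset.sum_mul, ← map_sum, ← map_sum, support_sum_monomial_coeff]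

end SOSAux2

open MvPolynomial Finsupp

noncomputable section SOSAux3

lemma qform_single2 {r : ℕ} (A : Fin r → Fin r → ℝ) (j k : Fin r) :
    ∑ a : Fin r, ∑ b : Fin r, (Pi.single j 1 : Fin r → ℝ) a * (Pi.single k 1 : Fin r → ℝ) b * A a b = A j k := by
  rw [Finset.sum_eq_single j]
  · rw [Finset.sum_eq_single k]
    · simp
    · intro b _ hb; simp [Pi.single_apply, hb]
    · intro h; exact absurd (Finset.mem_univ k) h
  · intro a _ ha
    apply Finset.sum_eq_zero
    intro b _
    simp [Pi.single_apply, ha]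
  · intro h; exact absurd (Finset.mem_univ j) h

lemma qform_add {r : ℕ} (A : Fin r → Fin r → ℝ) (y z : Fin r → ℝ) :
    ∑ a : Fin r, ∑ b : Fin r, (y a + z a) * (y b + z b) * A a b
      = (∑ a : Fin r, ∑ b : Fin r, y a * y b * A a b)
        + (∑ a : Fin r, ∑ b : Fin r, y a * z b * A a b)
        + (∑ a : Fin r, ∑ b : Fin r, z a * y b * A a b)
        + (∑ a : Fin r, ∑ b : Fin r, z a * z b * A a b) := by
  rw [← Finset.sum_add_distrib, ← Finset.sum_add_distrib, ← Finset.sum_add_distrib]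
  apply Finset.sum_congr rfl
  intro a _
  rw [← Finset.sum_add_distrib, ← Finset.sum_add_distrib, ← Finset.sum_add_distrib]
  apply Finset.sum_congr rfl
  intro b _
  ring

lemma quad_eq {r : ℕ} (p q : Fin r → Fin r → ℝ)
    (hp : ∀ j k, p j k = p k j) (hq : ∀ j k, q j k = q k j)
    (h : ∀ y : Fin r → ℝ, ∑ a : Fin r, ∑ b : Fin r, y a * y b * p a b
        = ∑ a : Fin r, ∑ b : Fin r, y a * y b * q a b) :
    ∀ j k, p j k = q j k := by
  have hdiag : ∀ j, p j j = q j j := by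
    intro j
    have := h (Pi.single j 1)
    rwa [qform_single2, qform_single2] at this
  intro j k
  have hpair := h (Pi.single j 1 + Pi.single k 1)
  simp only [Pi.add_apply] at hpair
  rw [qform_add, qform_add, qform_single2, qform_single2, qform_single2, qform_single2,
    qform_single2, qform_single2, qform_single2, qform_single2] at hpair
  have h1 := hdiag j
  have h2 := hdiag k
  have h3 := hp j k
  have h4 := hq j k
  linarith

lemma sum_sq_expand {r s : ℕ} (c : Fin s → Fin r → ℝ) (y : Fin r → ℝ) :
    ∑ i : Fin s, (∑ a : Fin r, c i a * y a)^2
      = ∑ a : Fin r, ∑ b : Fin r, y a * y b * (∑ i : Fin s, c i a * c i b) := by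
  have step : ∀ i : Fin s, (∑ a : Fin r, c i a * y a)^2
      = ∑ a : Fin r, ∑ b : Fin r, y a * y b * (c i a * c i b) := by
    intro i
    rw [pow_two, Finset.sum_mul_sum]
    exact Finset.sum_congr rfl fun a _ => Finset.sum_congr rfl fun b _ => by ring
  rw [Finset.sum_congr rfl fun i _ => step i, Finset.sum_comm]
  refine Finset.sum_congr rfl fun a _ => ?_
  rw [Finset.sum_comm]
  refine Finset.sum_congr rfl fun b _ => ?_
  rw [Finset.mul_sum]

end SOSAux3

open Matrix

/-- A symmetric `r × r` polynomial matrix `P(x)` in `n` variables is an SOS matrix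
(`P(x) = M(x)ᵀ M(x)` for some polynomial matrix `M`) if and only if the scalar
polynomial `yᵀ P(x) y`, viewed as a polynomial in the `n + r` variables
`(x₁,…,xₙ,y₁,…,y_r)`, is a sum of squares of polynomials. -/
theorem sos_matrix_iff_scalar_sos {n r : ℕ}
    (P : Matrix (Fin r) (Fin r) (MvPolynomial (Fin n) ℝ)) (hPsym : P.IsSymm) :
    (∃ (s : ℕ) (M : Matrix (Fin s) (Fin r) (MvPolynomial (Fin n) ℝ)), P = Mᵀ * M) ↔
      (∃ (s : ℕ) (f : Fin s → MvPolynomial (Fin n ⊕ Fin r) ℝ),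
        (∑ i : Fin r, ∑ j : Fin r,
            MvPolynomial.X (Sum.inr i) * MvPolynomial.X (Sum.inr j) *
              MvPolynomial.rename Sum.inl (P i j)) = ∑ i, (f i) ^ 2) := by
  constructor
  · rintro ⟨s, M, hM⟩
    refine ⟨s, fun k => ∑ j : Fin r, rename Sum.inl (M k j) * X (Sum.inr j), ?_⟩
    calc ∑ a : Fin r, ∑ b : Fin r,
            (X (Sum.inr a) : MvPolynomial (Fin n ⊕ Fin r) ℝ) * X (Sum.inr b)
              * rename Sum.inl (P a b)
        = ∑ a : Fin r, ∑ b : Fin r, ∑ k : Fin s,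
            (rename Sum.inl (M k a) * X (Sum.inr a)) *
              (rename Sum.inl (M k b) * X (Sum.inr b)) := by
          refine Finset.sum_congr rfl fun a _ => Finset.sum_congr rfl fun b _ => ?_
          rw [hM, Matrix.mul_apply]
          simp only [Matrix.transpose_apply]
          rw [map_sum, Finset.mul_sum]
          exact Finset.sum_congr rfl fun k _ => by rw [_root_.map_mul]; ring
      _ = ∑ k : Fin s, ∑ a : Fin r, ∑ b : Fin r,
            (rename Sum.inl (M k a) * X (Sum.inr a)) *
              (rename Sum.inl (M k b) * X (Sum.inr b)) := by
          rw [Finset.sum_congr rfl fun a _ => Finset.sum_comm, Finset.sum_comm]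
      _ = ∑ k : Fin s, (∑ j : Fin r, rename Sum.inl (M k j) * X (Sum.inr j))^2 := by
          refine Finset.sum_congr rfl fun k _ => ?_
          rw [pow_two, Finset.sum_mul_sum]
  · rintro ⟨s, f, hf⟩
    have hQ := Q_hom P
    rw [hf] at hQ
    -- every f i has components only in weighted degree ≤ 1
    have key : ∀ D : ℕ, (∀ i, ∀ d ∈ (f i).support, weight (wSOS n r) d ≤ D + 1) →
        ∀ i, ∀ d ∈ (f i).support, weight (wSOS n r) d ≤ 1 := by
      intro D
      induction D with
      | zero => exact fun h => h
      | succ D ih =>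
        intro hb
        apply ih
        intro i d hd
        have hcomp : weightedHomogeneousComponent (wSOS n r) ((D+2)+(D+2)) (∑ i, f i ^ 2) = 0 :=
          hQ.weightedHomogeneousComponent_ne _ (by omega)
        rw [map_sum] at hcomp
        have hsq : ∀ i, weightedHomogeneousComponent (wSOS n r) ((D+2)+(D+2)) ((f i)^2)
            = (weightedHomogeneousComponent (wSOS n r) (D+2) (f i))^2 := by
          intro i
          rw [pow_two, pow_two]
          exact comp_mul_top (wSOS n r) (D+2) (f i) (fun d hd => hb i d hd)
        have hzero : ∀ i, weightedHomogeneousComponent (wSOS n r) (D+2) (f i) = 0 := by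
          apply sos_eq_zero
          rw [← hcomp]
          exact Finset.sum_congr rfl fun i _ => (hsq i).symm
        have hle := hb i d hd
        rcases Nat.lt_or_ge (weight (wSOS n r) d) (D+2) with h | h
        · omega
        · exfalso
          have hc : MvPolynomial.coeff d (f i) = 0 := by
            have hcc := congrArg (MvPolynomial.coeff d) (hzero i)
            rw [coeff_weightedHomogeneousComponent, if_pos (by omega)] at hcc
            simpa using hcc
          exact MvPolynomial.mem_support_iff.mp hd hc
    have h1 : ∀ i, ∀ d ∈ (f i).support, weight (wSOS n r) d ≤ 1 := by
      apply key (Finset.univ.sup (fun i => ((f i).support.sup fun d => weight (wSOS n r) d)))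
      intro i d hd
      calc weight (wSOS n r) d ≤ (f i).support.sup fun d => weight (wSOS n r) d :=
            Finset.le_sup hd
        _ ≤ Finset.univ.sup (fun i => ((f i).support.sup fun d => weight (wSOS n r) d)) :=
            Finset.le_sup (f := fun i => ((f i).support.sup fun d => weight (wSOS n r) d))
              (Finset.mem_univ i)
        _ ≤ _ := Nat.le_succ _
    have h0 : ∀ i, weightedHomogeneousComponent (wSOS n r) 0 (f i) = 0 := by
      apply sos_eq_zero
      have hcomp : weightedHomogeneousComponent (wSOS n r) 0 (∑ i, f i ^ 2) = 0 :=
        hQ.weightedHomogeneousComponent_ne _ (by omega)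
      rw [map_sum] at hcomp
      rw [← hcomp]
      refine Finset.sum_congr rfl fun i _ => ?_
      rw [pow_two, pow_two]
      exact (comp_mul_bot (wSOS n r) (f i) (f i)).symm
    have hhom : ∀ i, IsWeightedHomogeneous (wSOS n r) (f i) 1 := by
      intro i d hd
      have hle : weight (wSOS n r) d ≤ 1 := h1 i d (MvPolynomial.mem_support_iff.mpr hd)
      have hne : weight (wSOS n r) d ≠ 0 := by
        intro h0'
        have hcc := congrArg (MvPolynomial.coeff d) (h0 i)
        rw [coeff_weightedHomogeneousComponent, if_pos h0'] at hcc
        exact hd (by simpa using hcc)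
      omega
    have hdec : ∀ i, f i = ∑ j : Fin r, rename Sum.inl (extSOS j (f i)) * X (Sum.inr j) :=
      fun i => decomp_linear (f i) (hhom i)
    refine ⟨s, Matrix.of (fun i a => extSOS a (f i)), ?_⟩
    refine Matrix.ext fun j k => ?_
    apply MvPolynomial.funext
    intro v
    -- the scalar quadratic-form identity
    have hsc : ∀ y : Fin r → ℝ,
        ∑ a : Fin r, ∑ b : Fin r, y a * y b * MvPolynomial.eval v (P a b)
          = ∑ a : Fin r, ∑ b : Fin r, y a * y b *
              (∑ i, MvPolynomial.eval v (extSOS a (f i)) * MvPolynomial.eval v (extSOS b (f i))) := by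
      intro y
      have hf2 : (∑ a : Fin r, ∑ b : Fin r,
          (X (Sum.inr a) : MvPolynomial (Fin n ⊕ Fin r) ℝ) * X (Sum.inr b)
            * rename Sum.inl (P a b))
          = ∑ i, (∑ a : Fin r, rename Sum.inl (extSOS a (f i)) * X (Sum.inr a))^2 := by
        rw [hf]
        exact Finset.sum_congr rfl fun i _ => by rw [← hdec i]
      have hev := congrArg (MvPolynomial.eval (Sum.elim v y)) hf2
      simp only [map_sum, _root_.map_mul, map_pow, eval_X, eval_rename, Sum.elim_comp_inl,
        Sum.elim_inr] at hev
      rw [sum_sq_expand (fun i a => MvPolynomial.eval v (extSOS a (f i))) y] at hev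
      calc ∑ a : Fin r, ∑ b : Fin r, y a * y b * MvPolynomial.eval v (P a b)
          = ∑ a : Fin r, ∑ b : Fin r, y a * y b * MvPolynomial.eval v (P a b) := rfl
        _ = _ := by
            rw [← hev]
    have hp' : ∀ a b : Fin r, MvPolynomial.eval v (P a b) = MvPolynomial.eval v (P b a) :=
      fun a b => by rw [hPsym.apply b a]
    have hq' : ∀ a b : Fin r,
        (∑ i, MvPolynomial.eval v (extSOS a (f i)) * MvPolynomial.eval v (extSOS b (f i)))
          = ∑ i, MvPolynomial.eval v (extSOS b (f i)) * MvPolynomial.eval v (extSOS a (f i)) :=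
      fun a b => Finset.sum_congr rfl fun i _ => mul_comm _ _
    have hmain : MvPolynomial.eval v (P j k)
        = ∑ i, MvPolynomial.eval v (extSOS j (f i)) * MvPolynomial.eval v (extSOS k (f i)) :=
      quad_eq _ _ hp' hq' hsc j k
    rw [hmain, Matrix.mul_apply, map_sum]
    refine Finset.sum_congr rfl fun i _ => ?_
    rw [Matrix.transpose_apply, _root_.map_mul]
    rfl
end

section
/- Let G = (V, E) be a chordal graph on V = {1, ..., r} with maximal cliques C_1, ..., C_t, and fix n, d with N = binomial(n+d,d). A partial symmetric polynomial matrix P(x) with pattern E (entries p_ij of degree at most 2d specified for (i,j) ∈ E*) admits an SOS completion, i.e., P ∈ Σ^r_{n,2d}(E, ?), if and only if (i) each principal submatrix P_k(x) = E_{C_k} P(x) E_{C_k}^T is an SOS matrix in Σ^{|C_k|}_{n,2d}, and (ii) the cliques' Gram matrices can be chosen consistently: there exist positive semidefinite Gram matrices Q_k ∈ S^{|C_k|N}_+ with P_k(x) = (I_{|C_k|} ⊗ v_d(x))^T Q_k (I_{|C_k|} ⊗ v_d(x)) such that for every pair i, j with overlapping hyper-cliques C̃_i ∩ C̃_j ≠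 ∅, the inflated matrices agree on the overlap: E_{C̃_i ∩ C̃_j} ( E_{C̃_i}^T Q_i E_{C̃_i} − E_{C̃_j}^T Q_j E_{C̃_j} ) E_{C̃_i ∩ C̃_j}^T = 0. -/
open Matrix

/-- A graph is chordal if every cycle of length at least 4 has a chord,
i.e. an edge joining two nonconsecutive nodes of the cycle. -/
def IsChordalGraph {V : Type*} (G : SimpleGraph V) : Prop :=
  ∀ (k : ℕ), 4 ≤ k → ∀ v : ZMod k → V, Function.Injective v →
    (∀ i, G.Adj (v i) (v (i + 1))) →
    ∃ i j : ZMod k, i ≠ j ∧ j ≠ i + 1 ∧ i ≠ j + 1 ∧ G.Adj (v i) (v j)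

/-- A maximal clique: a clique not contained in any other clique. -/
def IsMaxClique {V : Type*} (G : SimpleGraph V) (s : Finset V) : Prop :=
  G.IsClique ↑s ∧ ∀ t : Finset V, G.IsClique ↑t → s ⊆ t → s = t

/-- The 0/1 index matrix `E_C` of a vertex subset `C ⊆ {1,…,r}`. -/
def indexMatrix {r : ℕ} (R : Type*) [Zero R] [One R] (C : Finset (Fin r)) :
    Matrix (Fin C.card) (Fin r) R :=
  Matrix.of fun i j => if ((C.orderIsoOfFin rfl i : Fin r) = j) then 1 else 0

/-- The 0/1 index matrix `E_{C̃}` of the hyper-clique `C̃` of `C` with block size `N`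
(rows and columns of `{1,…,rN}` being indexed by pairs in `Fin r × Fin N`). -/
def hyperIndexMatrix {r : ℕ} (R : Type*) [Zero R] [One R] (N : ℕ) (C : Finset (Fin r)) :
    Matrix (Fin C.card × Fin N) (Fin r × Fin N) R :=
  Matrix.of fun p q =>
    if ((C.orderIsoOfFin rfl p.1 : Fin r) = q.1 ∧ p.2 = q.2) then 1 else 0

/-- `v` enumerates (as monomials) all exponent vectors of total degree at most `d`
in `n` variables, i.e. it is the monomial vector `v_d(x)` up to ordering. -/
def IsMonomialBasis (n d : ℕ) {N : ℕ} (v : Fin N → MvPolynomial (Fin n) ℝ) : Prop :=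
  ∃ m : Fin N → (Fin n →₀ ℕ), Function.Injective m ∧
    (∀ i, (m i).sum (fun _ e => e) ≤ d) ∧
    (∀ s : Fin n →₀ ℕ, (s.sum fun _ e => e) ≤ d → ∃ i, m i = s) ∧
    (∀ i, v i = MvPolynomial.monomial (m i) 1)

/-- The `mN × m` polynomial matrix `I_m ⊗ v(x)`, with its column index collapsed. -/
noncomputable def idKronV (m : ℕ) {N n : ℕ} (v : Fin N → MvPolynomial (Fin n) ℝ) :
    Matrix (Fin m × Fin N) (Fin m) (MvPolynomial (Fin n) ℝ) :=
  Matrix.of fun p j => if p.1 = j then v p.2 else 0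


open SimpleGraph

namespace ChordalAux
variable {V : Type} {G : SimpleGraph V}

lemma getVert_mem_support {u v : V} (p : G.Walk u v) (n : ℕ) :
    p.getVert n ∈ p.support := by
  by_cases h : n ≤ p.length
  · exact Walk.mem_support_iff_exists_getVert.mpr ⟨n, rfl, h⟩
  · rw [p.getVert_of_length_le (le_of_not_ge h)]
    exact p.end_mem_support

lemma path_getVert_inj {u v : V} (p : G.Walk u v) (hp : p.IsPath) :
    ∀ m n, m ≤ p.length → n ≤ p.length → p.getVert m = p.getVert n → m = n := by
  induction p with
  | nil => intro m n hm hn _; simp at hm hn; omega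
  | @cons a b c h q ih =>
    intro m n hm hn heq
    have hq : q.IsPath := hp.of_cons
    have hans : a ∉ q.support := by
      have := hp.support_nodup
      simp [Walk.support_cons] at this
      exact this.1
    match m, n with
    | 0, 0 => rfl
    | 0, (n+1) =>
      exfalso
      rw [Walk.getVert_zero, Walk.getVert_cons_succ] at heq
      exact hans (heq ▸ getVert_mem_support q n)
    | (m+1), 0 =>
      exfalso
      rw [Walk.getVert_zero, Walk.getVert_cons_succ] at heq
      exact hans (heq ▸ getVert_mem_support q m)
    | (m+1), (n+1) =>
      rw [Walk.getVert_cons_succ, Walk.getVert_cons_succ] at heq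
      have := ih hq m n (by simpa using hm) (by simpa using hn) heq
      omega

/-- Take the first `n` darts of a walk. -/
def wtake {u v : V} : (p : G.Walk u v) → (n : ℕ) → G.Walk u (p.getVert n)
  | p, 0 => Walk.nil.copy rfl (p.getVert_zero).symm
  | Walk.nil, (n+1) => Walk.nil
  | Walk.cons h q, (n+1) => (Walk.cons h (wtake q n)).copy rfl (Walk.getVert_cons_succ q h).symm

lemma length_wtake {u v : V} (p : G.Walk u v) (n : ℕ) (hn : n ≤ p.length) :
    (wtake p n).length = n := by
  induction p generalizing n with
  | nil =>
    simp only [Walk.length_nil, Nat.le_zero] at hn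
    subst hn
    simp [wtake]
  | @cons a b c h q ih =>
    match n with
    | 0 => simp [wtake]
    | (n+1) =>
      simp only [wtake, Walk.length_copy, Walk.length_cons]
      rw [ih n (by simpa using hn)]

lemma support_wtake_subset {u v : V} (p : G.Walk u v) (n : ℕ) :
    ∀ y ∈ (wtake p n).support, y ∈ p.support := by
  induction p generalizing n with
  | nil =>
    intro y hy
    match n with
    | 0 => simpa [wtake] using hy
    | (n+1) => simpa [wtake] using hy
  | @cons a b c h q ih =>
    intro y hy
    match n with
    | 0 =>
      simp [wtake] at hy
      simp [hy]
    | (n+1) =>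
      simp only [wtake, Walk.support_copy, Walk.support_cons, List.mem_cons] at hy
      simp only [Walk.support_cons, List.mem_cons]
      rcases hy with rfl | hy
      · exact Or.inl rfl
      · exact Or.inr (ih n y hy)

lemma length_drop {u v : V} (p : G.Walk u v) (n : ℕ) :
    (p.drop n).length = p.length - n := by
  induction p generalizing n with
  | nil => match n with
    | 0 => rfl
    | (n+1) => simp [Walk.drop]
  | @cons a b c h q ih =>
    match n with
    | 0 => simp [Walk.drop]
    | (n+1) => exact Walk.drop_length _ _

lemma support_drop_subset {u v : V} (p : G.Walk u v) (n : ℕ) :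
    ∀ y ∈ (p.drop n).support, y ∈ p.support := by
  induction p generalizing n with
  | nil =>
    intro y hy
    match n with
    | 0 => exact hy
    | (n+1) => exact hy
  | @cons a b c h q ih =>
    intro y hy
    match n with
    | 0 => simpa [Walk.drop] using hy
    | (n+1) =>
      simp only [Walk.drop, Walk.support_copy] at hy
      simp [Walk.support_cons]
      exact Or.inr (ih n y hy)

/-- The shortcut walk through a chord from position `m` to position `n`. -/
noncomputable def shortcut {u v : V} (p : G.Walk u v) (m n : ℕ)
    (h : G.Adj (p.getVert m) (p.getVert n)) : G.Walk u v :=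
  (wtake p m).append (Walk.cons h (p.drop n))

lemma length_shortcut {u v : V} (p : G.Walk u v) (m n : ℕ) (hm : m ≤ p.length)
    (hn : n ≤ p.length) (h : G.Adj (p.getVert m) (p.getVert n)) :
    (shortcut p m n h).length = m + 1 + (p.length - n) := by
  simp only [shortcut, Walk.length_append, length_wtake p m hm, length_drop,
    Walk.length_cons]
  omega

lemma support_shortcut_subset {u v : V} (p : G.Walk u v) (m n : ℕ)
    (h : G.Adj (p.getVert m) (p.getVert n)) :
    ∀ y ∈ (shortcut p m n h).support, y ∈ p.support := by
  intro y hy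
  simp only [shortcut] at hy
  rcases (Walk.mem_support_append_iff _ _).mp hy with hy | hy
  · exact support_wtake_subset p m y hy
  · simp [Walk.support_cons] at hy
    rcases hy with rfl | hy
    · exact getVert_mem_support p m
    · exact List.mem_of_mem_drop hy

end ChordalAux

namespace ChordalAux

/-- A vertex is simplicial if its neighborhood is a clique. -/
def Simplicial {V : Type*} (G : SimpleGraph V) (x : V) : Prop :=
  ∀ y z, G.Adj x y → G.Adj x z → y ≠ z → G.Adj y z

lemma chordal_induce {V : Type*} {G : SimpleGraph V} (hG : IsChordalGraph G) (s : Set V) :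
    IsChordalGraph (G.induce s) := by
  intro k hk v hv hadj
  obtain ⟨i, j, h1, h2, h3, h4⟩ := hG k hk (fun i => (v i : V))
    (fun i j hij => hv (Subtype.ext hij)) (fun i => by simpa using hadj i)
  refine ⟨i, j, h1, h2, h3, ?_⟩
  simpa using h4

def Separates {V : Type} (G : SimpleGraph V) (a b : V) (S : Finset V) : Prop :=
  a ∉ S ∧ b ∉ S ∧ ∀ p : G.Walk a b, ∃ x ∈ p.support, x ∈ S

theorem dirac_aux : ∀ (n : ℕ) (V : Type) (G : SimpleGraph V) (_ : Fintype V),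
    Fintype.card V ≤ n → IsChordalGraph G →
    (∀ u v : V, u ≠ v → G.Adj u v) ∨
      (∃ a b : V, a ≠ b ∧ ¬ G.Adj a b ∧ Simplicial G a ∧ Simplicial G b) := by
  intro n
  induction n with
  | zero =>
    intro V G hF hcard hG
    left
    intro u
    exfalso
    have hE : IsEmpty V := Fintype.card_eq_zero_iff.mp (le_antisymm hcard (Nat.zero_le _))
    exact (hE.false u)
  | succ n ih =>
    intro V G hF hcard hG
    classical
    by_cases hcomp : ∀ u v : V, u ≠ v → G.Adj u v
    · exact Or.inl hcomp
    right
    push_neg at hcomp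
    obtain ⟨a, b, hab, hnadj⟩ := hcomp
    -- a separator exists
    have hsep_exists : Separates G a b (Finset.univ \ {a, b}) := by
      refine ⟨by simp, by simp, ?_⟩
      intro p
      cases p with
      | nil => exact absurd rfl hab
      | @cons _ w _ h q =>
        by_cases hw : w = b
        · exact absurd (hw ▸ h) hnadj
        · exact ⟨w, by simp [SimpleGraph.Walk.support_cons, q.start_mem_support],
            by simp [Ne.symm h.ne, hw]⟩
    have hex : ∃ k, ∃ S, Separates G a b S ∧ S.card = k :=
      ⟨_, _, hsep_exists, rfl⟩
    obtain ⟨S, hS, hcardS⟩ := Nat.find_spec hex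
    have hmin : ∀ S', Separates G a b S' → S.card ≤ S'.card := by
      intro S' hS'
      rw [hcardS]
      exact Nat.find_min' hex ⟨S', hS', rfl⟩
    -- reachability sets
    set A : Set V := {x | ∃ p : G.Walk a x, ∀ y ∈ p.support, y ∉ S} with hA
    set B : Set V := {x | ∃ p : G.Walk b x, ∀ y ∈ p.support, y ∉ S} with hB
    have haA : a ∈ A := ⟨SimpleGraph.Walk.nil, by simpa using hS.1⟩
    have hbB : b ∈ B := ⟨SimpleGraph.Walk.nil, by simpa using hS.2.1⟩
    have hA_not_S : ∀ x ∈ A, x ∉ S := fun x hx => by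
      obtain ⟨p, hp⟩ := hx
      exact hp x p.end_mem_support
    have hB_not_S : ∀ x ∈ B, x ∉ S := fun x hx => by
      obtain ⟨p, hp⟩ := hx
      exact hp x p.end_mem_support
    have hA_closed : ∀ x ∈ A, ∀ y, G.Adj x y → y ∉ S → y ∈ A := by
      rintro x ⟨p, hp⟩ y hxy hyS
      refine ⟨p.append (SimpleGraph.Walk.cons hxy SimpleGraph.Walk.nil), ?_⟩
      intro z hz
      rcases (SimpleGraph.Walk.mem_support_append_iff _ _).mp hz with hz | hz
      · exact hp z hz
      · simp only [SimpleGraph.Walk.support_cons, SimpleGraph.Walk.support_nil,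
          List.mem_cons, List.not_mem_nil, or_false] at hz
        rcases hz with rfl | rfl
        · exact hp z p.end_mem_support
        · exact hyS
    have hB_closed : ∀ x ∈ B, ∀ y, G.Adj x y → y ∉ S → y ∈ B := by
      rintro x ⟨p, hp⟩ y hxy hyS
      refine ⟨p.append (SimpleGraph.Walk.cons hxy SimpleGraph.Walk.nil), ?_⟩
      intro z hz
      rcases (SimpleGraph.Walk.mem_support_append_iff _ _).mp hz with hz | hz
      · exact hp z hz
      · simp only [SimpleGraph.Walk.support_cons, SimpleGraph.Walk.support_nil,
          List.mem_cons, List.not_mem_nil, or_false] at hz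
        rcases hz with rfl | rfl
        · exact hp z p.end_mem_support
        · exact hyS
    have hAB_disj : ∀ x, x ∈ A → x ∈ B → False := by
      rintro x ⟨p, hp⟩ ⟨q, hq⟩
      obtain ⟨z, hz, hzS⟩ := hS.2.2 (p.append q.reverse)
      rcases (SimpleGraph.Walk.mem_support_append_iff _ _).mp hz with hz | hz
      · exact hp z hz hzS
      · rw [SimpleGraph.Walk.support_reverse, List.mem_reverse] at hz
        exact hq z hz hzS
    have hA_support : ∀ (x : V) (p : G.Walk a x), (∀ y ∈ p.support, y ∉ S) →
        ∀ y ∈ p.support, y ∈ A := by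
      intro x p hp y hy
      obtain ⟨q, r, rfl⟩ := SimpleGraph.Walk.mem_support_iff_exists_append.mp hy
      exact ⟨q, fun z hz => hp z ((SimpleGraph.Walk.mem_support_append_iff _ _).mpr
        (Or.inl hz))⟩
    have hB_support : ∀ (x : V) (p : G.Walk b x), (∀ y ∈ p.support, y ∉ S) →
        ∀ y ∈ p.support, y ∈ B := by
      intro x p hp y hy
      obtain ⟨q, r, rfl⟩ := SimpleGraph.Walk.mem_support_iff_exists_append.mp hy
      exact ⟨q, fun z hz => hp z ((SimpleGraph.Walk.mem_support_append_iff _ _).mpr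
        (Or.inl hz))⟩
    have keyA : ∀ (c z : V) (w : G.Walk c z), c ∈ A → z ∈ S →
        (∀ y ∈ w.support, y ∈ S → y = z) → ∃ x, x ∈ A ∧ G.Adj x z := by
      intro c z w
      induction w with
      | nil => intro hc hzS _; exact absurd hzS (hA_not_S _ hc)
      | @cons c c' z' hadj w ihw =>
        intro hc hzS hsup
        by_cases hcu : c' = z'
        · subst hcu; exact ⟨c, hc, hadj⟩
        · have hc'S : c' ∉ S := fun hmem =>
            hcu (hsup c' (by simp [SimpleGraph.Walk.support_cons, w.start_mem_support]) hmem)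
          exact ihw (hA_closed c hc c' hadj hc'S) hzS
            (fun y hy hyS => hsup y (by
              simp only [SimpleGraph.Walk.support_cons, List.mem_cons]
              exact Or.inr hy) hyS)
    have keyB : ∀ (c z : V) (w : G.Walk c z), c ∈ B → z ∈ S →
        (∀ y ∈ w.support, y ∈ S → y = z) → ∃ x, x ∈ B ∧ G.Adj x z := by
      intro c z w
      induction w with
      | nil => intro hc hzS _; exact absurd hzS (hB_not_S _ hc)
      | @cons c c' z' hadj w ihw =>
        intro hc hzS hsup
        by_cases hcu : c' = z'
        · subst hcu; exact ⟨c, hc, hadj⟩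
        · have hc'S : c' ∉ S := fun hmem =>
            hcu (hsup c' (by simp [SimpleGraph.Walk.support_cons, w.start_mem_support]) hmem)
          exact ihw (hB_closed c hc c' hadj hc'S) hzS
            (fun y hy hyS => hsup y (by
              simp only [SimpleGraph.Walk.support_cons, List.mem_cons]
              exact Or.inr hy) hyS)
    -- every separator vertex has a neighbor in A and in B
    have hnb : ∀ u ∈ S, (∃ x, x ∈ A ∧ G.Adj x u) ∧ (∃ x, x ∈ B ∧ G.Adj x u) := by
      intro u hu
      have hcard_lt : (S.erase u).card < S.card := Finset.card_erase_lt_of_mem hu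
      have hnotSep : ¬ Separates G a b (S.erase u) := fun hsep => by
        have := hmin _ hsep; omega
      have ha' : a ∉ S.erase u := fun h => hS.1 (Finset.mem_of_mem_erase h)
      have hb' : b ∉ S.erase u := fun h => hS.2.1 (Finset.mem_of_mem_erase h)
      obtain ⟨p, hp⟩ : ∃ p : G.Walk a b, ∀ x ∈ p.support, x ∉ S.erase u := by
        by_contra hno
        push_neg at hno
        exact hnotSep ⟨ha', hb', fun p => by
          obtain ⟨x, hx1, hx2⟩ := hno p
          exact ⟨x, hx1, hx2⟩⟩
      obtain ⟨z, hz, hzS⟩ := hS.2.2 p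
      have hz_u : z = u := by
        by_contra hne
        exact hp z hz (Finset.mem_erase.mpr ⟨hne, hzS⟩)
      subst hz_u
      constructor
      · -- neighbor in A
        have hq_supp : ∀ y ∈ (p.takeUntil z hz).support, y ∈ S → y = z := by
          intro y hy hyS
          by_contra hne
          exact hp y (SimpleGraph.Walk.support_takeUntil_subset p hz hy)
            (Finset.mem_erase.mpr ⟨hne, hyS⟩)
        exact keyA a z (p.takeUntil z hz) haA hzS hq_supp
      · -- neighbor in B : use the reverse walk from b
        have hz' : z ∈ p.reverse.support := by
          rw [SimpleGraph.Walk.support_reverse, List.mem_reverse]; exact hz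
        have hq_supp : ∀ y ∈ (p.reverse.takeUntil z hz').support, y ∈ S → y = z := by
          intro y hy hyS
          by_contra hne
          have : y ∈ p.support := by
            have := SimpleGraph.Walk.support_takeUntil_subset p.reverse hz' hy
            rwa [SimpleGraph.Walk.support_reverse, List.mem_reverse] at this
          exact hp y this (Finset.mem_erase.mpr ⟨hne, hyS⟩)
        exact keyB b z (p.reverse.takeUntil z hz') hbB hzS hq_supp
    -- S is a clique
    have hSclique : ∀ u ∈ S, ∀ w ∈ S, u ≠ w → G.Adj u w := by
      intro u hu w hw huw
      by_contra hnuw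
      obtain ⟨⟨x₁, hx₁A, hx₁u⟩, ⟨y₂, hy₂B, hy₂u⟩⟩ := hnb u hu
      obtain ⟨⟨x₂, hx₂A, hx₂w⟩, ⟨y₁, hy₁B, hy₁w⟩⟩ := hnb w hw
      -- interior-in-A walks from u to w, interior-in-B walks from w to u
      have hWA : ∃ p : G.Walk u w, ∀ y ∈ p.support, y ≠ u → y ≠ w → y ∈ A := by
        obtain ⟨p₁, hp₁⟩ := hx₁A
        obtain ⟨p₂, hp₂⟩ := hx₂A
        refine ⟨SimpleGraph.Walk.cons hx₁u.symm ((p₁.reverse.append p₂).append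
          (SimpleGraph.Walk.cons hx₂w SimpleGraph.Walk.nil)), ?_⟩
        intro y hy hyu hyw
        simp only [SimpleGraph.Walk.support_cons, List.mem_cons] at hy
        rcases hy with rfl | hy
        · exact absurd rfl hyu
        rcases (SimpleGraph.Walk.mem_support_append_iff _ _).mp hy with hy | hy
        · rcases (SimpleGraph.Walk.mem_support_append_iff _ _).mp hy with hy | hy
          · rw [SimpleGraph.Walk.support_reverse, List.mem_reverse] at hy
            exact hA_support _ p₁ hp₁ y hy
          · exact hA_support _ p₂ hp₂ y hy
        · simp only [SimpleGraph.Walk.support_cons, SimpleGraph.Walk.support_nil,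
            List.mem_cons, List.not_mem_nil, or_false] at hy
          rcases hy with rfl | rfl
          · exact hA_support _ p₂ hp₂ _ p₂.end_mem_support
          · exact absurd rfl hyw
      have hWB : ∃ p : G.Walk w u, ∀ y ∈ p.support, y ≠ w → y ≠ u → y ∈ B := by
        obtain ⟨p₁, hp₁⟩ := hy₁B
        obtain ⟨p₂, hp₂⟩ := hy₂B
        refine ⟨SimpleGraph.Walk.cons hy₁w.symm ((p₁.reverse.append p₂).append
          (SimpleGraph.Walk.cons hy₂u SimpleGraph.Walk.nil)), ?_⟩
        intro y hy hyw hyu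
        simp only [SimpleGraph.Walk.support_cons, List.mem_cons] at hy
        rcases hy with rfl | hy
        · exact absurd rfl hyw
        rcases (SimpleGraph.Walk.mem_support_append_iff _ _).mp hy with hy | hy
        · rcases (SimpleGraph.Walk.mem_support_append_iff _ _).mp hy with hy | hy
          · rw [SimpleGraph.Walk.support_reverse, List.mem_reverse] at hy
            exact hB_support _ p₁ hp₁ y hy
          · exact hB_support _ p₂ hp₂ y hy
        · simp only [SimpleGraph.Walk.support_cons, SimpleGraph.Walk.support_nil,
            List.mem_cons, List.not_mem_nil, or_false] at hy
          rcases hy with rfl | rfl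
          · exact hB_support _ p₂ hp₂ _ p₂.end_mem_support
          · exact absurd rfl hyu
      -- minimal such walks, made into paths via bypass
      have hexA : ∃ k, ∃ p : G.Walk u w,
          (∀ y ∈ p.support, y ≠ u → y ≠ w → y ∈ A) ∧ p.length = k := by
        obtain ⟨p, hp⟩ := hWA; exact ⟨p.length, p, hp, rfl⟩
      have hexB : ∃ k, ∃ p : G.Walk w u,
          (∀ y ∈ p.support, y ≠ w → y ≠ u → y ∈ B) ∧ p.length = k := by
        obtain ⟨p, hp⟩ := hWB; exact ⟨p.length, p, hp, rfl⟩
      obtain ⟨W₁, hW₁cond, hW₁len⟩ := Nat.find_spec hexA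
      obtain ⟨W₂, hW₂cond, hW₂len⟩ := Nat.find_spec hexB
      set P₁ := W₁.bypass with hP₁def
      set P₂ := W₂.bypass with hP₂def
      have hP₁path : P₁.IsPath := W₁.bypass_isPath
      have hP₂path : P₂.IsPath := W₂.bypass_isPath
      have hP₁cond : ∀ y ∈ P₁.support, y ≠ u → y ≠ w → y ∈ A :=
        fun y hy => hW₁cond y (W₁.support_bypass_subset hy)
      have hP₂cond : ∀ y ∈ P₂.support, y ≠ w → y ≠ u → y ∈ B :=
        fun y hy => hW₂cond y (W₂.support_bypass_subset hy)
      have hP₁min : ∀ p : G.Walk u w, (∀ y ∈ p.support, y ≠ u → y ≠ w → y ∈ A) →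
          P₁.length ≤ p.length := by
        intro p hp
        exact le_trans (le_trans W₁.length_bypass_le (le_of_eq hW₁len))
          (Nat.find_min' hexA ⟨p, hp, rfl⟩)
      have hP₂min : ∀ p : G.Walk w u, (∀ y ∈ p.support, y ≠ w → y ≠ u → y ∈ B) →
          P₂.length ≤ p.length := by
        intro p hp
        exact le_trans (le_trans W₂.length_bypass_le (le_of_eq hW₂len))
          (Nat.find_min' hexB ⟨p, hp, rfl⟩)
      have hP₁2 : 2 ≤ P₁.length := by
        rcases Nat.lt_or_ge P₁.length 2 with h | h
        · interval_cases hl : P₁.length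
          · exact absurd (SimpleGraph.Walk.eq_of_length_eq_zero hl) huw
          · exact absurd (SimpleGraph.Walk.adj_of_length_eq_one hl) hnuw
        · exact h
      have hP₂2 : 2 ≤ P₂.length := by
        rcases Nat.lt_or_ge P₂.length 2 with h | h
        · interval_cases hl : P₂.length
          · exact absurd (SimpleGraph.Walk.eq_of_length_eq_zero hl) huw.symm
          · exact absurd (SimpleGraph.Walk.adj_of_length_eq_one hl).symm hnuw
        · exact h
      set C := P₁.append P₂ with hCdef
      have hk : C.length = P₁.length + P₂.length := SimpleGraph.Walk.length_append _ _
      have hk4 : 4 ≤ C.length := by omega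
      haveI : NeZero C.length := ⟨by omega⟩
      haveI : Fact (1 < C.length) := ⟨by omega⟩
      have hC₁ : ∀ p, p ≤ P₁.length → C.getVert p = P₁.getVert p := by
        intro p hp
        rw [hCdef, SimpleGraph.Walk.getVert_append]
        by_cases h : p < P₁.length
        · simp [h]
        · have hpe : p = P₁.length := by omega
          subst hpe
          simp [SimpleGraph.Walk.getVert_length]
      have hC₂ : ∀ p, P₁.length ≤ p → C.getVert p = P₂.getVert (p - P₁.length) := by
        intro p hp
        rw [hCdef, SimpleGraph.Walk.getVert_append, if_neg (by omega)]
      have hP₁A : ∀ p, 0 < p → p < P₁.length → P₁.getVert p ∈ A := by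
        intro p h0 hlt
        refine hP₁cond _ (getVert_mem_support P₁ p) ?_ ?_
        · intro he
          have : p = 0 := path_getVert_inj P₁ hP₁path p 0 (by omega) (by omega)
            (by rw [he, SimpleGraph.Walk.getVert_zero])
          omega
        · intro he
          have : p = P₁.length := path_getVert_inj P₁ hP₁path p P₁.length (by omega)
            (le_refl _) (by rw [he, SimpleGraph.Walk.getVert_length])
          omega
      have hP₂B : ∀ p, 0 < p → p < P₂.length → P₂.getVert p ∈ B := by
        intro p h0 hlt
        refine hP₂cond _ (getVert_mem_support P₂ p) ?_ ?_
        · intro he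
          have : p = 0 := path_getVert_inj P₂ hP₂path p 0 (by omega) (by omega)
            (by rw [he, SimpleGraph.Walk.getVert_zero])
          omega
        · intro he
          have : p = P₂.length := path_getVert_inj P₂ hP₂path p P₂.length (by omega)
            (le_refl _) (by rw [he, SimpleGraph.Walk.getVert_length])
          omega
      have hgetzero : C.getVert 0 = u := C.getVert_zero
      -- injectivity of positions
      have core : ∀ p q, p < q → q < C.length → C.getVert p = C.getVert q → False := by
        intro p q hpq hq heq
        by_cases hq1 : q ≤ P₁.length
        · rw [hC₁ p (by omega), hC₁ q hq1] at heq
          have := path_getVert_inj P₁ hP₁path p q (by omega) hq1 heq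
          omega
        · by_cases hp1 : p ≤ P₁.length
          · have hyB : C.getVert q ∈ B := by
              rw [hC₂ q (by omega)]
              exact hP₂B _ (by omega) (by omega)
            by_cases hp0 : p = 0
            · subst hp0
              rw [hgetzero] at heq
              have huB : u ∈ B := by rw [heq]; exact hyB
              exact hB_not_S u huB hu
            · by_cases hpk : p = P₁.length
              · have hw' : C.getVert p = w := by
                  rw [hC₁ p (by omega), hpk, SimpleGraph.Walk.getVert_length]
                rw [hw'] at heq
                have hwB : w ∈ B := by rw [heq]; exact hyB
                exact hB_not_S w hwB hw
              · have hpA : C.getVert p ∈ A := by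
                  rw [hC₁ p hp1]
                  exact hP₁A _ (by omega) (by omega)
                exact hAB_disj _ (heq ▸ hpA) hyB
          · rw [hC₂ p (by omega), hC₂ q (by omega)] at heq
            have := path_getVert_inj P₂ hP₂path (p - P₁.length) (q - P₁.length)
              (by omega) (by omega) heq
            omega
      have hval1 : ∀ i : ZMod C.length, (i + 1).val = (i.val + 1) % C.length := by
        intro i
        rw [ZMod.val_add, ZMod.val_one]
      obtain ⟨i, j, hij, hji1, hij1, hchord⟩ := hG C.length hk4
        (fun i => C.getVert i.val)
        (by
          intro i j h
          simp only at h
          apply ZMod.val_injective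
          by_contra hne
          rcases lt_or_gt_of_ne hne with hlt | hlt
          · exact core _ _ hlt (ZMod.val_lt j) h
          · exact core _ _ hlt (ZMod.val_lt i) h.symm)
        (by
          intro i
          have hlt : i.val < C.length := ZMod.val_lt i
          have hadjs := C.adj_getVert_succ hlt
          by_cases hlast : i.val + 1 = C.length
          · have h1 : (i + 1).val = 0 := by rw [hval1, hlast, Nat.mod_self]
            rw [h1, hgetzero]
            have h2 : C.getVert (i.val + 1) = u := by
              rw [hlast, SimpleGraph.Walk.getVert_length]
            rwa [h2] at hadjs
          · have h1 : (i + 1).val = i.val + 1 := by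
              rw [hval1]; exact Nat.mod_eq_of_lt (by omega)
            rwa [h1])
      have hpq_ne : i.val ≠ j.val := fun h => hij (ZMod.val_injective _ h)
      have hji1' : j.val ≠ (i.val + 1) % C.length :=
        fun h => hji1 (ZMod.val_injective _ (h.trans (hval1 i).symm))
      have hij1' : i.val ≠ (j.val + 1) % C.length :=
        fun h => hij1 (ZMod.val_injective _ (h.trans (hval1 j).symm))
      have main : ∀ p q : ℕ, p < q → q < C.length →
          G.Adj (C.getVert p) (C.getVert q) →
          q ≠ (p + 1) % C.length → p ≠ (q + 1) % C.length → False := by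
        intro p q hpq hq hadj hq1 hp1
        have hq1' : p + 1 < q := by
          have hmod : (p + 1) % C.length = p + 1 := Nat.mod_eq_of_lt (by omega)
          omega
        by_cases hqk1 : q ≤ P₁.length
        · -- both endpoints on P₁ : shortcut contradicts minimality
          have hadj' : G.Adj (P₁.getVert p) (P₁.getVert q) := by
            rw [← hC₁ p (by omega), ← hC₁ q hqk1]; exact hadj
          have hcond : ∀ y ∈ (shortcut P₁ p q hadj').support, y ≠ u → y ≠ w → y ∈ A :=
            fun y hy => hP₁cond y (support_shortcut_subset P₁ p q hadj' y hy)
          have hmin' := hP₁min _ hcond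
          rw [length_shortcut P₁ p q (by omega) hqk1 hadj'] at hmin'
          omega
        · by_cases hpk1 : P₁.length ≤ p
          · -- both on P₂
            have hadj' : G.Adj (P₂.getVert (p - P₁.length)) (P₂.getVert (q - P₁.length)) := by
              rw [← hC₂ p hpk1, ← hC₂ q (by omega)]; exact hadj
            have hcond : ∀ y ∈ (shortcut P₂ (p - P₁.length) (q - P₁.length) hadj').support,
                y ≠ w → y ≠ u → y ∈ B :=
              fun y hy => hP₂cond y (support_shortcut_subset P₂ _ _ hadj' y hy)
            have hmin' := hP₂min _ hcond
            rw [length_shortcut P₂ _ _ (by omega) (by omega) hadj'] at hmin'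
            omega
          · -- p on P₁ (interior or u), q on P₂ interior
            push_neg at hpk1
            have hqB : C.getVert q ∈ B := by
              rw [hC₂ q (by omega)]
              exact hP₂B _ (by omega) (by omega)
            by_cases hp0 : p = 0
            · subst hp0
              have hqlt : q + 1 < C.length := by
                rcases Nat.lt_or_ge (q + 1) C.length with h | h
                · exact h
                · have hqe : q + 1 = C.length := by omega
                  exact absurd (by rw [hqe, Nat.mod_self]) (Ne.symm hp1)
              have hadj' : G.Adj (P₂.getVert (q - P₁.length)) (P₂.getVert P₂.length) := by
                rw [SimpleGraph.Walk.getVert_length, ← hC₂ q (by omega)]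
                rw [hgetzero] at hadj
                exact hadj.symm
              have hcond : ∀ y ∈ (shortcut P₂ (q - P₁.length) P₂.length hadj').support,
                  y ≠ w → y ≠ u → y ∈ B :=
                fun y hy => hP₂cond y (support_shortcut_subset P₂ _ _ hadj' y hy)
              have hmin' := hP₂min _ hcond
              rw [length_shortcut P₂ _ _ (by omega) (le_refl _) hadj'] at hmin'
              omega
            · have hpA : C.getVert p ∈ A := by
                rw [hC₁ p (by omega)]
                exact hP₁A _ (by omega) hpk1
              have : C.getVert q ∈ A := hA_closed _ hpA _ hadj (hB_not_S _ hqB)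
              exact hAB_disj _ this hqB
      rcases lt_or_gt_of_ne hpq_ne with hlt | hlt
      · exact main i.val j.val hlt (ZMod.val_lt j) hchord hji1' hij1'
      · exact main j.val i.val hlt (ZMod.val_lt i) hchord.symm hij1' hji1'
    -- extraction of a simplicial vertex on each side
    have extract : ∀ (X : Set V) (c : V), c ∈ X →
        (∀ x ∈ X, x ∉ S) →
        (∀ x ∈ X, ∀ y, G.Adj x y → y ∉ S → y ∈ X) →
        Fintype.card ↥(X ∪ ↑S : Set V) ≤ n →
        ∃ x : V, x ∈ X ∧ Simplicial G x := by
      intro X c hcX hXS hXcl hcard'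
      have hclosure : ∀ x ∈ X, ∀ y, G.Adj x y → y ∈ (X ∪ ↑S : Set V) := by
        intro x hx y hadj
        by_cases hyS : y ∈ S
        · exact Or.inr hyS
        · exact Or.inl (hXcl x hx y hadj hyS)
      obtain hcomp' | ⟨p, q, hpq, hnpq, hps, hqs⟩ :=
        ih ↥(X ∪ ↑S : Set V) (G.induce (X ∪ ↑S : Set V)) inferInstance hcard'
          (chordal_induce hG _)
      · refine ⟨c, hcX, ?_⟩
        intro y z hcy hcz hyz
        have hy : y ∈ (X ∪ ↑S : Set V) := hclosure c hcX y hcy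
        have hz : z ∈ (X ∪ ↑S : Set V) := hclosure c hcX z hcz
        have := hcomp' ⟨y, hy⟩ ⟨z, hz⟩ (fun h => hyz (congrArg Subtype.val h))
        simpa using this
      · have hP : ∀ r : ↥(X ∪ ↑S : Set V), Simplicial (G.induce _) r → (r : V) ∈ X →
            Simplicial G (r : V) := by
          intro r hr hrX
          intro y z hry hrz hyz
          have hy : y ∈ (X ∪ ↑S : Set V) := hclosure r hrX y hry
          have hz : z ∈ (X ∪ ↑S : Set V) := hclosure r hrX z hrz
          have := hr ⟨y, hy⟩ ⟨z, hz⟩ (by simpa using hry) (by simpa using hrz)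
            (fun h => hyz (congrArg Subtype.val h))
          simpa using this
        by_cases hpX : (p : V) ∈ X
        · exact ⟨p, hpX, hP p hps hpX⟩
        · have hpS : (p : V) ∈ S := by
            rcases p.2 with h | h
            · exact absurd h hpX
            · exact h
          by_cases hqX : (q : V) ∈ X
          · exact ⟨q, hqX, hP q hqs hqX⟩
          · have hqS : (q : V) ∈ S := by
              rcases q.2 with h | h
              · exact absurd h hqX
              · exact h
            exfalso
            have hadj := hSclique _ hpS _ hqS (fun h => hpq (Subtype.ext h))
            exact hnpq (by simpa using hadj)
    have hcardA : Fintype.card ↥(A ∪ ↑S : Set V) ≤ n := by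
      have hblt : Fintype.card ↥(A ∪ ↑S : Set V) < Fintype.card V := by
        apply Fintype.card_lt_of_injective_of_notMem
          (Subtype.val : ↥(A ∪ ↑S : Set V) → V) Subtype.coe_injective (b := b)
        rintro ⟨⟨x, hx⟩, rfl⟩
        rcases hx with h | h
        · exact hAB_disj _ h hbB
        · exact hS.2.1 h
      omega
    have hcardB : Fintype.card ↥(B ∪ ↑S : Set V) ≤ n := by
      have hblt : Fintype.card ↥(B ∪ ↑S : Set V) < Fintype.card V := by
        apply Fintype.card_lt_of_injective_of_notMem
          (Subtype.val : ↥(B ∪ ↑S : Set V) → V) Subtype.coe_injective (b := a)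
        rintro ⟨⟨x, hx⟩, rfl⟩
        rcases hx with h | h
        · exact hAB_disj _ haA h
        · exact hS.1 h
      omega
    obtain ⟨x, hxA, hxsimp⟩ := extract A a haA hA_not_S hA_closed hcardA
    obtain ⟨y, hyB, hysimp⟩ := extract B b hbB hB_not_S hB_closed hcardB
    refine ⟨x, y, ?_, ?_, hxsimp, hysimp⟩
    · intro h
      exact hAB_disj x hxA (h ▸ hyB)
    · intro hadj
      have : y ∈ A := hA_closed x hxA y hadj (hB_not_S y hyB)
      exact hAB_disj y this hyB

end ChordalAux

namespace ChordalAux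
theorem exists_simplicial {V : Type} [Fintype V] (G : SimpleGraph V)
    (hG : IsChordalGraph G) (hne : Nonempty V) : ∃ x, Simplicial G x := by
  obtain h | ⟨a, b, _, _, ha, _⟩ :=
    dirac_aux (Fintype.card V) V G inferInstance le_rfl hG
  · obtain ⟨x⟩ := hne
    exact ⟨x, fun y z hxy hxz hyz => h y z hyz⟩
  · exact ⟨a, ha⟩
end ChordalAux

open Matrix
open scoped RealInnerProductSpace

open scoped MatrixOrder in
lemma psd_eq_conjTranspose_mul_self_aux {ι : Type*} [Fintype ι] [DecidableEq ι]
    {A : Matrix ι ι ℝ} (h : A.PosSemidef) : ∃ B : Matrix ι ι ℝ, A = Bᴴ * B := by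
  obtain ⟨B, hB⟩ := CStarAlgebra.nonneg_iff_eq_star_mul_self.mp h.nonneg
  exact ⟨B, hB⟩

/-- `M` is "positive semidefinite on the index set `s`". -/
def SubPSD {ι : Type*} [Fintype ι] (s : Finset ι) (M : Matrix ι ι ℝ) : Prop :=
  (∀ i ∈ s, ∀ j ∈ s, M j i = M i j) ∧
    ∀ x : ι → ℝ, (∀ i, i ∉ s → x i = 0) → 0 ≤ x ⬝ᵥ M.mulVec x

lemma SubPSD.exists_gram {ι : Type*} [Fintype ι] [DecidableEq ι] {s : Finset ι}
    {M : Matrix ι ι ℝ} (h : SubPSD s M) :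
    ∃ f : ι → EuclideanSpace ℝ s, ∀ i ∈ s, ∀ j ∈ s,
      (inner ℝ (f i) (f j) : ℝ) = M i j := by
  classical
  set Ms : Matrix s s ℝ := M.submatrix (↑· : s → ι) (↑· : s → ι) with hMs
  have hpsd : Ms.PosSemidef := by
    apply Matrix.PosSemidef.of_dotProduct_mulVec_nonneg
    · ext i j
      simpa [Ms, Matrix.conjTranspose_apply] using h.1 i i.2 j j.2
    · intro y
      have hx0 : ∀ i, i ∉ s → (fun i => if hi : i ∈ s then y ⟨i, hi⟩ else 0) i = 0 := by
        intro i hi; simp [hi]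
      have hq := h.2 _ hx0
      have key : (fun i => if hi : i ∈ s then y ⟨i, hi⟩ else 0) ⬝ᵥ
          M.mulVec (fun i => if hi : i ∈ s then y ⟨i, hi⟩ else 0)
          = star y ⬝ᵥ Ms.mulVec y := by
        unfold dotProduct Matrix.mulVec dotProduct
        rw [show (∑ i : ι, (if hi : i ∈ s then y ⟨i, hi⟩ else 0) *
              (∑ j : ι, M i j * (if hj : j ∈ s then y ⟨j, hj⟩ else 0)))
            = ∑ i ∈ s, (if hi : i ∈ s then y ⟨i, hi⟩ else 0) *
              (∑ j : ι, M i j * (if hj : j ∈ s then y ⟨j, hj⟩ else 0)) from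
          (Finset.sum_subset (Finset.subset_univ s) (by intro i _ hi; simp [hi])).symm]
        rw [← Finset.sum_coe_sort s]
        refine Finset.sum_congr rfl ?_
        intro i _
        rw [show (∑ j : ι, M (↑i) j * (if hj : j ∈ s then y ⟨j, hj⟩ else 0))
            = ∑ j ∈ s, M (↑i) j * (if hj : j ∈ s then y ⟨j, hj⟩ else 0) from
          (Finset.sum_subset (Finset.subset_univ s) (by intro j _ hj; simp [hj])).symm]
        rw [← Finset.sum_coe_sort s]
        simp [Ms, mul_comm]
      rw [key] at hq
      exact hq
  obtain ⟨Bq, hBq⟩ := psd_eq_conjTranspose_mul_self_aux hpsd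
  refine ⟨fun i => if hi : i ∈ s then
      (WithLp.toLp 2 (fun k => Bq k ⟨i, hi⟩) : EuclideanSpace ℝ s) else 0, ?_⟩
  intro i hi j hj
  simp only [dif_pos hi, dif_pos hj]
  rw [PiLp.inner_apply]
  simp only [RCLike.inner_apply, starRingEnd_apply, star_trivial]
  have : ∑ k : s, Bq k ⟨j, hj⟩ * Bq k ⟨i, hi⟩
      = (Bqᴴ * Bq) ⟨i, hi⟩ ⟨j, hj⟩ := by
    rw [Matrix.mul_apply]
    exact Finset.sum_congr rfl fun k _ => by rw [Matrix.conjTranspose_apply, star_trivial, mul_comm]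
  rw [this, ← hBq]
  rfl
open Matrix
open scoped RealInnerProductSpace

section Merge
variable {ι : Type*} [Fintype ι] [DecidableEq ι]

lemma gram_merge (s₁ s₂ : Finset ι) {A B : Matrix ι ι ℝ}
    (f : ι → EuclideanSpace ℝ s₁) (g : ι → EuclideanSpace ℝ s₂)
    (hf : ∀ i ∈ s₁, ∀ j ∈ s₁, (inner ℝ (f i) (f j) : ℝ) = A i j)
    (hg : ∀ i ∈ s₂, ∀ j ∈ s₂, (inner ℝ (g i) (g j) : ℝ) = B i j)
    (hAB : ∀ i ∈ s₁, ∀ j ∈ s₁, i ∈ s₂ → j ∈ s₂ → A i j = B i j) :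
    ∃ Q : Matrix ι ι ℝ, Q.PosSemidef ∧ (∀ i ∈ s₁, ∀ j ∈ s₁, Q i j = A i j) ∧
      (∀ i ∈ s₂, ∀ j ∈ s₂, Q i j = B i j) := by
  classical
  set K : ({x : ι // x ∈ s₁ ∩ s₂} → ℝ) →ₗ[ℝ] EuclideanSpace ℝ s₂ :=
    Fintype.linearCombination ℝ (fun i : {x : ι // x ∈ s₁ ∩ s₂} => g i) with hK
  set L : ({x : ι // x ∈ s₁ ∩ s₂} → ℝ) →ₗ[ℝ] EuclideanSpace ℝ s₁ :=
    Fintype.linearCombination ℝ (fun i : {x : ι // x ∈ s₁ ∩ s₂} => f i) with hL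
  -- inner products agree
  have hmem₁ : ∀ i : {x : ι // x ∈ s₁ ∩ s₂}, (i : ι) ∈ s₁ := fun i => (Finset.mem_inter.mp i.2).1
  have hmem₂ : ∀ i : {x : ι // x ∈ s₁ ∩ s₂}, (i : ι) ∈ s₂ := fun i => (Finset.mem_inter.mp i.2).2
  have hinner : ∀ c c' : {x : ι // x ∈ s₁ ∩ s₂} → ℝ, (inner ℝ (L c) (L c') : ℝ) = inner ℝ (K c) (K c') := by
    intro c c'
    rw [hK, hL]
    simp only [Fintype.linearCombination_apply]
    rw [sum_inner, sum_inner]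
    refine Finset.sum_congr rfl ?_
    intro i _
    rw [inner_sum, inner_sum]
    refine Finset.sum_congr rfl ?_
    intro j _
    rw [real_inner_smul_left, real_inner_smul_left, real_inner_smul_right,
      real_inner_smul_right, hf _ (hmem₁ i) _ (hmem₁ j), hg _ (hmem₂ i) _ (hmem₂ j),
      hAB _ (hmem₁ i) _ (hmem₁ j) (hmem₂ i) (hmem₂ j)]
  have hker : LinearMap.ker K ≤ LinearMap.ker L := by
    intro c hc
    rw [LinearMap.mem_ker] at hc ⊢
    have h0 : (inner ℝ (L c) (L c) : ℝ) = 0 := by rw [hinner, hc, inner_zero_right]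
    exact inner_self_eq_zero.mp h0
  set φ : ↥(LinearMap.range K) →ₗ[ℝ] EuclideanSpace ℝ s₁ :=
    ((LinearMap.ker K).liftQ L hker).comp K.quotKerEquivRange.symm.toLinearMap with hφ
  have hφK : ∀ c : {x : ι // x ∈ s₁ ∩ s₂} → ℝ, ∀ hKc : K c ∈ LinearMap.range K,
      φ ⟨K c, hKc⟩ = L c := by
    intro c hKc
    have h1 : K.quotKerEquivRange (Submodule.Quotient.mk c) = ⟨K c, hKc⟩ :=
      Subtype.ext (K.quotKerEquivRange_apply_mk c)
    rw [hφ, LinearMap.comp_apply]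
    have h2 : K.quotKerEquivRange.symm.toLinearMap ⟨K c, hKc⟩
        = Submodule.Quotient.mk c := by
      rw [← h1]; simp
    rw [h2, Submodule.liftQ_apply]
  set pr : EuclideanSpace ℝ s₂ → EuclideanSpace ℝ s₂ :=
    fun x => (LinearMap.range K).starProjection x with hpr
  have hprmem : ∀ x, pr x ∈ LinearMap.range K :=
    fun x => (LinearMap.range K).starProjection_apply_mem x
  have hprid : ∀ x ∈ LinearMap.range K, pr x = x :=
    fun x hx => Submodule.starProjection_eq_self_iff.mpr hx
  have hprorth : ∀ x, x - pr x ∈ (LinearMap.range K)ᗮ :=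
    fun x => Submodule.sub_starProjection_mem_orthogonal x
  set T : EuclideanSpace ℝ s₂ → EuclideanSpace ℝ s₁ := fun x => φ ⟨pr x, hprmem x⟩ with hT
  -- key fact F1
  have hF1 : ∀ x y : EuclideanSpace ℝ s₂, (inner ℝ (T x) (T y) : ℝ) = inner ℝ (pr x) (pr y) := by
    intro x y
    obtain ⟨c, hc⟩ := hprmem x
    obtain ⟨c', hc'⟩ := hprmem y
    have hx : T x = L c := by
      rw [hT]; simp only
      have heq : (⟨pr x, hprmem x⟩ : LinearMap.range K) = ⟨K c, LinearMap.mem_range_self K c⟩ :=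
        Subtype.ext hc.symm
      rw [heq, hφK]
    have hy : T y = L c' := by
      rw [hT]; simp only
      have heq : (⟨pr y, hprmem y⟩ : LinearMap.range K) = ⟨K c', LinearMap.mem_range_self K c'⟩ :=
        Subtype.ext hc'.symm
      rw [heq, hφK]
    rw [hx, hy, hinner, hc, hc']
  -- key fact F2
  have hF2 : ∀ i : ι, ∀ hi : i ∈ s₁ ∩ s₂, T (g i) = f i := by
    intro i hi
    have hgi : g i = K (Pi.single ⟨i, hi⟩ 1) := by
      rw [hK]
      simp [Fintype.linearCombination_apply, Pi.single_apply]
    have hmem : g i ∈ LinearMap.range K := hgi ▸ LinearMap.mem_range_self K _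
    have h3 : T (g i) = φ ⟨g i, hmem⟩ := by
      rw [hT]; simp only
      have heq : (⟨pr (g i), hprmem (g i)⟩ : LinearMap.range K) = ⟨g i, hmem⟩ :=
        Subtype.ext (hprid (g i) hmem)
      rw [heq]
    rw [h3]
    have h4 : (⟨g i, hmem⟩ : LinearMap.range K) = ⟨K (Pi.single ⟨i, hi⟩ 1),
        LinearMap.mem_range_self K _⟩ := Subtype.ext hgi
    rw [h4, hφK, hL]
    simp [Fintype.linearCombination_apply, Pi.single_apply]
  -- the glued Gram vectors
  set h₁ : ι → EuclideanSpace ℝ s₁ := fun i => if i ∈ s₁ then f i else T (g i) with hh₁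
  set h₂ : ι → EuclideanSpace ℝ s₂ := fun i => if i ∈ s₁ then 0 else (g i - pr (g i)) with hh₂
  refine ⟨Matrix.of fun i j => (inner ℝ (h₁ i) (h₁ j) : ℝ) + inner ℝ (h₂ i) (h₂ j),
    Matrix.PosSemidef.of_dotProduct_mulVec_nonneg ?_ ?_, ?_, ?_⟩
  · -- hermitian
    ext i j
    simp only [Matrix.conjTranspose_apply, Matrix.of_apply, star_trivial]
    rw [real_inner_comm (h₁ i), real_inner_comm (h₂ i)]
  · -- quadratic form
    intro x
    have key : (star x) ⬝ᵥ ((Matrix.of fun i j =>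
          (inner ℝ (h₁ i) (h₁ j) : ℝ) + inner ℝ (h₂ i) (h₂ j)).mulVec x)
        = (inner ℝ (∑ i, x i • h₁ i) (∑ j, x j • h₁ j) : ℝ)
          + inner ℝ (∑ i, x i • h₂ i) (∑ j, x j • h₂ j) := by
      rw [sum_inner, sum_inner]
      simp only [inner_sum, real_inner_smul_left, real_inner_smul_right,
        dotProduct, Matrix.mulVec, Matrix.of_apply, star_trivial]
      rw [← Finset.sum_add_distrib]
      refine Finset.sum_congr rfl fun i _ => ?_
      rw [Finset.mul_sum, ← Finset.sum_add_distrib]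
      refine Finset.sum_congr rfl fun j _ => ?_
      ring
    rw [key]
    exact add_nonneg real_inner_self_nonneg real_inner_self_nonneg
  · -- agrees with A on s₁
    intro i hi j hj
    simp only [Matrix.of_apply, hh₁, hh₂, if_pos hi, if_pos hj, inner_zero_left,
      add_zero]
    exact hf i hi j hj
  · -- agrees with B on s₂
    intro i hi j hj
    by_cases hi1 : i ∈ s₁ <;> by_cases hj1 : j ∈ s₁
    · simp only [Matrix.of_apply, hh₁, hh₂, if_pos hi1, if_pos hj1, inner_zero_left,
        add_zero]
      rw [hf i hi1 j hj1]
      exact hAB i hi1 j hj1 hi hj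
    · -- i ∈ s₁, j ∉ s₁
      simp only [Matrix.of_apply, hh₁, hh₂, if_pos hi1, if_neg hj1, inner_zero_left,
        add_zero]
      have hii : i ∈ s₁ ∩ s₂ := Finset.mem_inter.mpr ⟨hi1, hi⟩
      have hgiK : g i ∈ LinearMap.range K := by
        have hgi : g i = K (Pi.single (⟨i, hii⟩ : {x : ι // x ∈ s₁ ∩ s₂}) 1) := by
          rw [hK]; simp [Fintype.linearCombination_apply, Pi.single_apply]
        exact hgi ▸ LinearMap.mem_range_self K _
      rw [← hF2 i hii, hF1, hprid (g i) hgiK]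
      have horth : (inner ℝ (g i) (g j - pr (g j)) : ℝ) = 0 :=
        Submodule.inner_right_of_mem_orthogonal hgiK (hprorth (g j))
      have h5 : (inner ℝ (g i) (pr (g j)) : ℝ) = inner ℝ (g i) (g j) := by
        have h6 := inner_sub_right (𝕜 := ℝ) (g i) (g j) (pr (g j))
        rw [horth] at h6
        linarith
      rw [h5]
      exact hg i hi j hj
    · -- i ∉ s₁, j ∈ s₁
      simp only [Matrix.of_apply, hh₁, hh₂, if_neg hi1, if_pos hj1, inner_zero_right,
        add_zero]
      have hjj : j ∈ s₁ ∩ s₂ := Finset.mem_inter.mpr ⟨hj1, hj⟩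
      have hgjK : g j ∈ LinearMap.range K := by
        have hgj : g j = K (Pi.single (⟨j, hjj⟩ : {x : ι // x ∈ s₁ ∩ s₂}) 1) := by
          rw [hK]; simp [Fintype.linearCombination_apply, Pi.single_apply]
        exact hgj ▸ LinearMap.mem_range_self K _
      rw [← hF2 j hjj, hF1, hprid (g j) hgjK]
      have horth : (inner ℝ (g j) (g i - pr (g i)) : ℝ) = 0 :=
        Submodule.inner_right_of_mem_orthogonal hgjK (hprorth (g i))
      have h5 : (inner ℝ (pr (g i)) (g j) : ℝ) = inner ℝ (g i) (g j) := by
        have h6 := inner_sub_right (𝕜 := ℝ) (g j) (g i) (pr (g i))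
        rw [horth] at h6
        have h7 : (inner ℝ (g j) (pr (g i)) : ℝ) = inner ℝ (g j) (g i) := by linarith
        calc (inner ℝ (pr (g i)) (g j) : ℝ) = inner ℝ (g j) (pr (g i)) := real_inner_comm _ _
          _ = inner ℝ (g j) (g i) := h7
          _ = inner ℝ (g i) (g j) := real_inner_comm _ _
      rw [h5]
      exact hg i hi j hj
    · -- both ∉ s₁
      simp only [Matrix.of_apply, hh₁, hh₂, if_neg hi1, if_neg hj1]
      rw [hF1]
      have expand : (inner ℝ (g i) (g j) : ℝ)
          = inner ℝ (pr (g i)) (pr (g j)) + inner ℝ (g i - pr (g i)) (g j - pr (g j)) := by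
        have h1 : (inner ℝ (pr (g i)) (g j - pr (g j)) : ℝ) = 0 :=
          Submodule.inner_right_of_mem_orthogonal (hprmem (g i)) (hprorth (g j))
        have h2 : (inner ℝ (g i - pr (g i)) (pr (g j)) : ℝ) = 0 := by
          rw [real_inner_comm]
          exact Submodule.inner_right_of_mem_orthogonal (hprmem (g j)) (hprorth (g i))
        have : g i = pr (g i) + (g i - pr (g i)) := by abel
        conv_lhs => rw [this]
        have : g j = pr (g j) + (g j - pr (g j)) := by abel
        conv_lhs => rw [this]
        rw [inner_add_left, inner_add_right, inner_add_right, h1, h2]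
        ring
      rw [← expand]
      exact hg i hi j hj

end Merge

namespace ChordalAux
open Matrix

lemma sum_split {V : Type} [Fintype V] [DecidableEq V] (v : V) (g : V → ℝ) :
    ∑ i : V, g i = (∑ i : {x : V // x ≠ v}, g ↑i) + g v := by
  rw [← Fintype.sum_subtype_add_sum_subtype (fun x => x ≠ v) g]
  congr 1
  rw [Fintype.sum_eq_single (⟨v, by simp⟩ : {x : V // ¬ x ≠ v})]
  intro b hb
  exfalso
  exact hb (Subtype.ext (not_not.mp b.2))

theorem chordal_completion : ∀ (n : ℕ) (V : Type) (_ : Fintype V) (F : Type)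
    (_ : Fintype F) (G : SimpleGraph V), Fintype.card V ≤ n → IsChordalGraph G →
    ∀ W : Matrix (V × F) (V × F) ℝ,
    (∀ s : Finset V, G.IsClique ↑s → SubPSD (s ×ˢ (Finset.univ : Finset F)) W) →
    ∃ Q : Matrix (V × F) (V × F) ℝ, Q.PosSemidef ∧
      ∀ i j : V, (G.Adj i j ∨ i = j) → ∀ a b : F, Q (i, a) (j, b) = W (i, a) (j, b) := by
  intro n
  induction n with
  | zero =>
    intro V hFV F hFF G hcard hG W hcl
    have hE : IsEmpty V := Fintype.card_eq_zero_iff.mp (le_antisymm hcard (Nat.zero_le _))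
    refine ⟨0, Matrix.PosSemidef.zero, ?_⟩
    intro i
    exact (hE.false i).elim
  | succ n ihn =>
    intro V hFV F hFF G hcard hG W hcl
    classical
    by_cases hne : Nonempty V
    swap
    · have hE : IsEmpty V := not_nonempty_iff.mp hne
      refine ⟨0, Matrix.PosSemidef.zero, ?_⟩
      intro i
      exact (hE.false i).elim
    -- pick a simplicial vertex
    obtain ⟨v, hv⟩ := exists_simplicial G hG hne
    -- the reduced graph
    set V' := {x : V // x ≠ v} with hV'
    set G' : SimpleGraph V' := G.induce {x : V | x ≠ v} with hG'
    have hG'chordal : IsChordalGraph G' := chordal_induce hG _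
    have hcard' : Fintype.card V' ≤ n := by
      have : Fintype.card V' < Fintype.card V := by
        apply Fintype.card_lt_of_injective_of_notMem
          (Subtype.val : V' → V) Subtype.coe_injective (b := v)
        rintro ⟨⟨x, hx⟩, hxv⟩
        exact hx hxv
      omega
    set W' : Matrix (V' × F) (V' × F) ℝ :=
      Matrix.of (fun p q => W ((p.1 : V), p.2) ((q.1 : V), q.2)) with hW'
    have hcl' : ∀ s' : Finset V', G'.IsClique ↑s' →
        SubPSD (s' ×ˢ (Finset.univ : Finset F)) W' := by
      intro s' hs'
      set s : Finset V := s'.image Subtype.val with hs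
      have hsclique : G.IsClique ↑s := by
        intro x hx y hy hxy
        simp only [hs, Finset.coe_image, Set.mem_image, Finset.mem_coe] at hx hy
        obtain ⟨x', hx', rfl⟩ := hx
        obtain ⟨y', hy', rfl⟩ := hy
        have := hs' hx' hy' (fun h => hxy (congrArg Subtype.val h))
        exact this
      obtain ⟨hsym, hform⟩ := hcl s hsclique
      constructor
      · intro p hp q hq
        rw [Finset.mem_product] at hp hq
        have hp1 : (p.1 : V) ∈ s := Finset.mem_image_of_mem _ hp.1
        have hq1 : (q.1 : V) ∈ s := Finset.mem_image_of_mem _ hq.1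
        exact hsym ((p.1 : V), p.2) (Finset.mem_product.mpr ⟨hp1, Finset.mem_univ _⟩)
          ((q.1 : V), q.2) (Finset.mem_product.mpr ⟨hq1, Finset.mem_univ _⟩)
      · intro x hx
        set xb : V × F → ℝ := fun p => if h : p.1 = v then 0 else x (⟨p.1, h⟩, p.2)
          with hxb
        have hxb0 : ∀ p : V × F, p ∉ s ×ˢ (Finset.univ : Finset F) → xb p = 0 := by
          intro p hp
          rw [hxb]
          by_cases h : p.1 = v
          · simp [h]
          · simp only [dif_neg h]
            apply hx
            intro hmem
            apply hp
            rw [Finset.mem_product] at hmem ⊢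
            exact ⟨Finset.mem_image_of_mem _ hmem.1, Finset.mem_univ _⟩
        have hq := hform xb hxb0
        have hkey : xb ⬝ᵥ W.mulVec xb = x ⬝ᵥ W'.mulVec x := by
          simp only [dotProduct, Matrix.mulVec, Fintype.sum_prod_type]
          rw [sum_split (v := v) (g := fun i => ∑ a : F, xb (i, a) *
            ∑ j : V, ∑ b : F, W (i, a) (j, b) * xb (j, b))]
          have hzv : (∑ a : F, xb (v, a) * ∑ j : V, ∑ b : F, W (v, a) (j, b) * xb (j, b)) = 0 := by
            apply Finset.sum_eq_zero
            intro a _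
            rw [hxb]
            simp
          rw [hzv, add_zero]
          refine Finset.sum_congr rfl fun i _ => Finset.sum_congr rfl fun a _ => ?_
          have hx1 : xb ((i : V), a) = x (i, a) := by
            rw [hxb]
            simp only [dif_neg i.2]
          rw [hx1]
          congr 1
          rw [sum_split (v := v) (g := fun j => ∑ b : F, W ((i : V), a) (j, b) * xb (j, b))]
          have hzv2 : (∑ b : F, W ((i : V), a) (v, b) * xb (v, b)) = 0 := by
            apply Finset.sum_eq_zero
            intro b _
            rw [hxb]
            simp
          rw [hzv2, add_zero]
          refine Finset.sum_congr rfl fun j _ => Finset.sum_congr rfl fun b _ => ?_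
          have hx2 : xb ((j : V), b) = x (j, b) := by
            rw [hxb]
            simp only [dif_neg j.2]
          rw [hx2, hW']
          rfl
        rw [hkey] at hq
        exact hq
    obtain ⟨Q₁, hQ₁psd, hQ₁match⟩ := ihn V' inferInstance F hFF G' hcard' hG'chordal W' hcl'
    -- merge data
    set s₁ : Finset (V × F) := (Finset.univ.erase v) ×ˢ (Finset.univ : Finset F) with hs₁
    set s₂ : Finset (V × F) :=
      (Finset.univ.filter (fun x => G.Adj v x ∨ x = v)) ×ˢ (Finset.univ : Finset F) with hs₂
    set A : Matrix (V × F) (V × F) ℝ := Matrix.of (fun p q =>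
      if hp : p.1 = v then 0 else if hq : q.1 = v then 0 else
        Q₁ (⟨p.1, hp⟩, p.2) (⟨q.1, hq⟩, q.2)) with hAdef
    have hQ₁sym : ∀ p q, Q₁ p q = Q₁ q p := by
      intro p q
      have := congrFun (congrFun hQ₁psd.1 q) p
      simpa [Matrix.conjTranspose_apply] using this
    have hApsd : SubPSD s₁ A := by
      constructor
      · intro p hp q hq
        rw [hAdef]
        simp only [Matrix.of_apply]
        rw [Finset.mem_product, Finset.mem_erase] at hp hq
        rw [dif_neg hp.1.1, dif_neg hq.1.1, dif_neg hq.1.1, dif_neg hp.1.1]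
        exact hQ₁sym _ _
      · intro x hx
        set x' : V' × F → ℝ := fun p => x ((p.1 : V), p.2) with hx'
        have hkey : x ⬝ᵥ A.mulVec x = x' ⬝ᵥ Q₁.mulVec x' := by
          simp only [dotProduct, Matrix.mulVec, Fintype.sum_prod_type]
          rw [sum_split (v := v) (g := fun i => ∑ a : F, x (i, a) *
            ∑ j : V, ∑ b : F, A (i, a) (j, b) * x (j, b))]
          have hxv : ∀ a : F, x (v, a) = 0 := by
            intro a
            apply hx
            rw [hs₁, Finset.mem_product]
            simp
          have hzv : (∑ a : F, x (v, a) * ∑ j : V, ∑ b : F, A (v, a) (j, b) * x (j, b)) = 0 := by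
            apply Finset.sum_eq_zero
            intro a _
            rw [hxv a, zero_mul]
          rw [hzv, add_zero]
          refine Finset.sum_congr rfl fun i _ => Finset.sum_congr rfl fun a _ => ?_
          congr 1
          rw [sum_split (v := v) (g := fun j => ∑ b : F, A ((i : V), a) (j, b) * x (j, b))]
          have hzv2 : (∑ b : F, A ((i : V), a) (v, b) * x (v, b)) = 0 := by
            apply Finset.sum_eq_zero
            intro b _
            have : x (v, b) = 0 := by
              apply hx
              rw [hs₁, Finset.mem_product]
              simp
            rw [this, mul_zero]
          rw [hzv2, add_zero]
          refine Finset.sum_congr rfl fun j _ => Finset.sum_congr rfl fun b _ => ?_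
          rw [hAdef]
          simp only [Matrix.of_apply]
          rw [dif_neg i.2, dif_neg j.2]
        rw [hkey]
        have := hQ₁psd.dotProduct_mulVec_nonneg x'
        simpa using this
    have hBpsd : SubPSD s₂ W := by
      apply hcl
      intro x hx y hy hxy
      simp only [Finset.coe_filter, Set.mem_setOf_eq, Finset.mem_univ, true_and] at hx hy
      rcases hx with hx | rfl
      · rcases hy with hy | rfl
        · exact hv x y hx hy hxy
        · exact hx.symm
      · rcases hy with hy | rfl
        · exact hy
        · exact absurd rfl hxy
    have hABagree : ∀ p ∈ s₁, ∀ q ∈ s₁, p ∈ s₂ → q ∈ s₂ → A p q = W p q := by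
      intro p hp1 q hq1 hp2 hq2
      rw [hs₁, Finset.mem_product, Finset.mem_erase] at hp1 hq1
      rw [hs₂, Finset.mem_product, Finset.mem_filter] at hp2 hq2
      have hpv : G.Adj v p.1 := by
        rcases hp2.1.2 with h | h
        · exact h
        · exact absurd h hp1.1.1
      have hqv : G.Adj v q.1 := by
        rcases hq2.1.2 with h | h
        · exact h
        · exact absurd h hq1.1.1
      rw [hAdef]
      simp only [Matrix.of_apply]
      rw [dif_neg hp1.1.1, dif_neg hq1.1.1]
      have hadj : G'.Adj ⟨p.1, hp1.1.1⟩ ⟨q.1, hq1.1.1⟩ ∨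
          (⟨p.1, hp1.1.1⟩ : V') = ⟨q.1, hq1.1.1⟩ := by
        by_cases hpq : p.1 = q.1
        · exact Or.inr (Subtype.ext hpq)
        · left
          have := hv p.1 q.1 hpv hqv hpq
          rw [hG']
          simpa using this
      have := hQ₁match ⟨p.1, hp1.1.1⟩ ⟨q.1, hq1.1.1⟩ hadj p.2 q.2
      rw [this, hW']
      rfl
    obtain ⟨f, hf⟩ := hApsd.exists_gram
    obtain ⟨g, hg⟩ := hBpsd.exists_gram
    obtain ⟨Q, hQpsd, hQA, hQB⟩ := gram_merge s₁ s₂ f g hf hg hABagree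
    refine ⟨Q, hQpsd, ?_⟩
    intro i j hij a b
    by_cases hiv : i = v
    · subst hiv
      have hjmem : (j, b) ∈ s₂ := by
        rw [hs₂, Finset.mem_product, Finset.mem_filter]
        rcases hij with h | h
        · exact ⟨⟨Finset.mem_univ _, Or.inl h⟩, Finset.mem_univ _⟩
        · exact ⟨⟨Finset.mem_univ _, Or.inr h.symm⟩, Finset.mem_univ _⟩
      have himem : (i, a) ∈ s₂ := by
        rw [hs₂, Finset.mem_product, Finset.mem_filter]
        exact ⟨⟨Finset.mem_univ _, Or.inr rfl⟩, Finset.mem_univ _⟩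
      exact hQB _ himem _ hjmem
    · by_cases hjv : j = v
      · subst hjv
        have himem : (i, a) ∈ s₂ := by
          rw [hs₂, Finset.mem_product, Finset.mem_filter]
          rcases hij with h | h
          · exact ⟨⟨Finset.mem_univ _, Or.inl h.symm⟩, Finset.mem_univ _⟩
          · exact ⟨⟨Finset.mem_univ _, Or.inr h⟩, Finset.mem_univ _⟩
        have hjmem : (j, b) ∈ s₂ := by
          rw [hs₂, Finset.mem_product, Finset.mem_filter]
          exact ⟨⟨Finset.mem_univ _, Or.inr rfl⟩, Finset.mem_univ _⟩
        exact hQB _ himem _ hjmem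
      · -- both differ from v : use the s₁ block
        have himem : (i, a) ∈ s₁ := by
          rw [hs₁, Finset.mem_product, Finset.mem_erase]
          exact ⟨⟨hiv, Finset.mem_univ _⟩, Finset.mem_univ _⟩
        have hjmem : (j, b) ∈ s₁ := by
          rw [hs₁, Finset.mem_product, Finset.mem_erase]
          exact ⟨⟨hjv, Finset.mem_univ _⟩, Finset.mem_univ _⟩
        rw [hQA _ himem _ hjmem, hAdef]
        simp only [Matrix.of_apply]
        rw [dif_neg hiv, dif_neg hjv]
        have hadj : G'.Adj ⟨i, hiv⟩ ⟨j, hjv⟩ ∨ (⟨i, hiv⟩ : V') = ⟨j, hjv⟩ := by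
          rcases hij with h | h
          · left
            rw [hG']
            simpa using h
          · exact Or.inr (Subtype.ext h)
        have := hQ₁match ⟨i, hiv⟩ ⟨j, hjv⟩ hadj a b
        rw [this, hW']
        rfl

end ChordalAux

namespace ChordalAux
open Matrix MvPolynomial

variable {n d N : ℕ}

/-- Expansion of a polynomial of degree at most `d` in the monomial basis. -/
lemma basis_expansion {v : Fin N → MvPolynomial (Fin n) ℝ}
    {m : Fin N → (Fin n →₀ ℕ)} (hminj : Function.Injective m)
    (hmsurj : ∀ s : Fin n →₀ ℕ, (s.sum fun _ e => e) ≤ d → ∃ i, m i = s)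
    (hvm : ∀ i, v i = MvPolynomial.monomial (m i) 1)
    (p : MvPolynomial (Fin n) ℝ) (hp : p.totalDegree ≤ d) :
    p = ∑ i : Fin N, MvPolynomial.C (p.coeff (m i)) * v i := by
  have h1 : ∀ i : Fin N, MvPolynomial.C (p.coeff (m i)) * v i
      = MvPolynomial.monomial (m i) (p.coeff (m i)) := by
    intro i
    rw [hvm i, MvPolynomial.C_mul_monomial, mul_one]
  rw [Finset.sum_congr rfl (fun i _ => h1 i)]
  have h2 : ∑ i : Fin N, (MvPolynomial.monomial (m i)) (p.coeff (m i))
      = ∑ s ∈ Finset.univ.image m, (MvPolynomial.monomial s) (p.coeff s) := by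
    rw [Finset.sum_image (fun x _ y _ h => hminj h)]
  rw [h2]
  have hsub : p.support ⊆ Finset.univ.image m := by
    intro s hs
    have hdeg : (s.sum fun _ e => e) ≤ d :=
      le_trans (MvPolynomial.le_totalDegree hs) hp
    obtain ⟨i, hi⟩ := hmsurj s hdeg
    exact Finset.mem_image.mpr ⟨i, Finset.mem_univ i, hi⟩
  rw [← Finset.sum_subset hsub (by
    intro s _ hs
    rw [MvPolynomial.notMem_support_iff.mp hs, MvPolynomial.monomial_zero])]
  exact (MvPolynomial.support_sum_monomial_coeff p).symm

lemma vdeg {v : Fin N → MvPolynomial (Fin n) ℝ}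
    {m : Fin N → (Fin n →₀ ℕ)} (hmdeg : ∀ i, (m i).sum (fun _ e => e) ≤ d)
    (hvm : ∀ i, v i = MvPolynomial.monomial (m i) 1) (i : Fin N) :
    (v i).totalDegree ≤ d := by
  rw [hvm i]
  exact le_trans (MvPolynomial.totalDegree_monomial_le _ _) (hmdeg i)

lemma expand_mul {v : Fin N → MvPolynomial (Fin n) ℝ} (x y : Fin N → ℝ) :
    (∑ a : Fin N, MvPolynomial.C (x a) * v a) * (∑ b : Fin N, MvPolynomial.C (y b) * v b)
    = ∑ a : Fin N, ∑ b : Fin N, MvPolynomial.C (x a * y b) * (v a * v b) := by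
  rw [Finset.sum_mul_sum]
  refine Finset.sum_congr rfl fun a _ => Finset.sum_congr rfl fun b _ => ?_
  rw [MvPolynomial.C_mul]
  ring

end ChordalAux

section IndexLemmas
open Matrix

variable {r : ℕ} {R : Type*} [CommRing R]

/-- notation for the order iso of a clique -/
noncomputable def cliqueIso {r : ℕ} (C : Finset (Fin r)) : Fin C.card ≃o {x // x ∈ C} :=
  C.orderIsoOfFin rfl

lemma indexMatrix_apply {C : Finset (Fin r)} (p : Fin C.card) (j : Fin r) :
    indexMatrix R C p j = if ((cliqueIso C p : Fin r) = j) then 1 else 0 := rfl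

lemma EPEt_apply (C : Finset (Fin r)) (P : Matrix (Fin r) (Fin r) R) (p q : Fin C.card) :
    (indexMatrix R C * P * (indexMatrix R C)ᵀ) p q
      = P (cliqueIso C p : Fin r) (cliqueIso C q : Fin r) := by
  rw [Matrix.mul_apply]
  have h1 : ∀ j, (indexMatrix R C * P) p j = P (cliqueIso C p : Fin r) j := by
    intro j
    rw [Matrix.mul_apply]
    rw [Finset.sum_eq_single ((cliqueIso C p : Fin r))]
    · rw [indexMatrix_apply, if_pos rfl, one_mul]
    · intro l _ hl
      rw [indexMatrix_apply, if_neg (Ne.symm hl), zero_mul]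
    · intro h
      exact absurd (Finset.mem_univ _) h
  rw [Finset.sum_eq_single ((cliqueIso C q : Fin r))]
  · rw [h1, Matrix.transpose_apply, indexMatrix_apply, if_pos rfl, mul_one]
  · intro l _ hl
    rw [Matrix.transpose_apply, indexMatrix_apply, if_neg (Ne.symm hl), mul_zero]
  · intro h
    exact absurd (Finset.mem_univ _) h

lemma mul_indexMatrix_transpose {s : ℕ} (C : Finset (Fin r))
    (M : Matrix (Fin s) (Fin r) R) (i : Fin s) (p : Fin C.card) :
    (M * (indexMatrix R C)ᵀ) i p = M i (cliqueIso C p : Fin r) := by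
  rw [Matrix.mul_apply]
  rw [Finset.sum_eq_single ((cliqueIso C p : Fin r))]
  · rw [Matrix.transpose_apply, indexMatrix_apply, if_pos rfl, mul_one]
  · intro l _ hl
    rw [Matrix.transpose_apply, indexMatrix_apply, if_neg (Ne.symm hl), mul_zero]
  · intro h
    exact absurd (Finset.mem_univ _) h

lemma hyperIndexMatrix_apply {N : ℕ} {C : Finset (Fin r)} (p : Fin C.card × Fin N)
    (q : Fin r × Fin N) :
    hyperIndexMatrix R N C p q
      = if ((cliqueIso C p.1 : Fin r) = q.1 ∧ p.2 = q.2) then 1 else 0 := rfl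

/-- Entry of the inflated matrix at a pair of clique members. -/
lemma inflation_apply_mem {N : ℕ} (C : Finset (Fin r))
    (Q : Matrix (Fin C.card × Fin N) (Fin C.card × Fin N) R)
    {i j : Fin r} (hi : i ∈ C) (hj : j ∈ C) (a b : Fin N) :
    ((hyperIndexMatrix R N C)ᵀ * Q * hyperIndexMatrix R N C) (i, a) (j, b)
      = Q ((cliqueIso C).symm ⟨i, hi⟩, a) ((cliqueIso C).symm ⟨j, hj⟩, b) := by
  rw [Matrix.mul_apply]
  have h1 : ∀ qe : Fin C.card × Fin N,
      ((hyperIndexMatrix R N C)ᵀ * Q) (i, a) qe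
        = Q ((cliqueIso C).symm ⟨i, hi⟩, a) qe := by
    intro qe
    rw [Matrix.mul_apply]
    rw [Finset.sum_eq_single ((cliqueIso C).symm ⟨i, hi⟩, a)]
    · rw [Matrix.transpose_apply, hyperIndexMatrix_apply]
      simp
    · intro pc _ hpc
      rw [Matrix.transpose_apply, hyperIndexMatrix_apply, if_neg, zero_mul]
      rintro ⟨h1, h2⟩
      apply hpc
      have hcoe : (cliqueIso C) pc.1 = ⟨i, hi⟩ := Subtype.ext h1
      have hfst : pc.1 = (cliqueIso C).symm ⟨i, hi⟩ := by
        rw [← hcoe, OrderIso.symm_apply_apply]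
      exact Prod.ext hfst h2
    · intro h
      exact absurd (Finset.mem_univ _) h
  rw [Finset.sum_eq_single ((cliqueIso C).symm ⟨j, hj⟩, b)]
  · rw [h1, hyperIndexMatrix_apply]
    simp
  · intro pc _ hpc
    rw [hyperIndexMatrix_apply, if_neg, mul_zero]
    rintro ⟨h1, h2⟩
    apply hpc
    have hcoe : (cliqueIso C) pc.1 = ⟨j, hj⟩ := Subtype.ext h1
    have hfst : pc.1 = (cliqueIso C).symm ⟨j, hj⟩ := by
      rw [← hcoe, OrderIso.symm_apply_apply]
    exact Prod.ext hfst h2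
  · intro h
    exact absurd (Finset.mem_univ _) h

end IndexLemmas

section KronLemma
open Matrix MvPolynomial

lemma idKronV_apply {m N n : ℕ} (v : Fin N → MvPolynomial (Fin n) ℝ)
    (p : Fin m × Fin N) (j : Fin m) :
    idKronV m v p j = if p.1 = j then v p.2 else 0 := rfl

set_option maxHeartbeats 1000000 in
lemma idKronV_gram_entry {n N : ℕ} (v : Fin N → MvPolynomial (Fin n) ℝ) (mdim : ℕ)
    (Qm : Matrix (Fin mdim × Fin N) (Fin mdim × Fin N) ℝ) (p q : Fin mdim) :
    ((idKronV mdim v)ᵀ * (Qm.map (fun a => MvPolynomial.C a) :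
        Matrix (Fin mdim × Fin N) (Fin mdim × Fin N) (MvPolynomial (Fin n) ℝ)) *
        idKronV mdim v) p q
      = ∑ a : Fin N, ∑ b : Fin N,
          MvPolynomial.C (Qm (p, a) (q, b)) * (v a * v b) := by
  have h1 : ∀ qe : Fin mdim × Fin N,
      ((idKronV mdim v)ᵀ * (Qm.map (fun a => MvPolynomial.C a) :
          Matrix (Fin mdim × Fin N) (Fin mdim × Fin N) (MvPolynomial (Fin n) ℝ))) p qe
        = ∑ a : Fin N, v a * MvPolynomial.C (Qm (p, a) qe) := by
    intro qe
    rw [Matrix.mul_apply, Fintype.sum_prod_type]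
    rw [Finset.sum_eq_single p]
    · refine Finset.sum_congr rfl fun a _ => ?_
      rw [Matrix.transpose_apply, idKronV_apply, if_pos rfl, Matrix.map_apply]
    · intro l _ hl
      apply Finset.sum_eq_zero
      intro a _
      rw [Matrix.transpose_apply, idKronV_apply, if_neg hl, zero_mul]
    · intro h
      exact absurd (Finset.mem_univ _) h
  rw [Matrix.mul_apply, Fintype.sum_prod_type]
  rw [Finset.sum_eq_single q]
  · rw [Finset.sum_comm]
    refine Finset.sum_congr rfl fun b _ => ?_
    rw [h1, idKronV_apply, if_pos rfl, Finset.sum_mul]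
    refine Finset.sum_congr rfl fun a _ => ?_
    ring
  · intro l _ hl
    apply Finset.sum_eq_zero
    intro b _
    rw [idKronV_apply, if_neg hl, mul_zero]
  · intro h
    exact absurd (Finset.mem_univ _) h

lemma idKronV_gram_entry' {n N : ℕ} (v : Fin N → MvPolynomial (Fin n) ℝ) (mdim : ℕ)
    (Qm : Matrix (Fin mdim × Fin N) (Fin mdim × Fin N) ℝ) (p q : Fin mdim) :
    ((((idKronV mdim v)ᵀ * Qm.map (fun a => MvPolynomial.C a) : Matrix _ _ _) *
        idKronV mdim v : Matrix (Fin mdim) (Fin mdim) (MvPolynomial (Fin n) ℝ))) p q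
      = ∑ a : Fin N, ∑ b : Fin N,
          MvPolynomial.C (Qm (p, a) (q, b)) * (v a * v b) :=
  idKronV_gram_entry v mdim Qm p q

end KronLemma

/-- ****SOS matrix completion** (Theorem 4): for a chordal graph `G` on `{1,…,r}` with
maximal cliques `C_1,…,C_t`, a partial symmetric polynomial matrix `P` with pattern
`E` (entries of degree at most `2d`, unspecified entries set to `0`) admits an SOS
completion `F ∈ Σ^r_{n,2d}` with `F_{ij} = P_{ij}` on `E* = E ∪ {(i,i)}` if and only
if (i) every principal submatrix `P_k = E_{C_k} P E_{C_k}ᵀ` is an SOS matrix in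
`Σ^{|C_k|}_{n,2d}`, and (ii) there are PSD Gram matrices `Q_k` of the `P_k` that are
consistent: the inflated matrices `E_{C̃_k}ᵀ Q_k E_{C̃_k}` agree on every overlap
`C̃_k ∩ C̃_l ≠ ∅` of the hyper-cliques. -/
theorem sos_matrix_chordal_completion {r t n d N : ℕ} (hN : N = (n + d).choose d)
    (v : Fin N → MvPolynomial (Fin n) ℝ) (hv : IsMonomialBasis n d v)
    (G : SimpleGraph (Fin r)) (hchordal : IsChordalGraph G)
    (C : Fin t → Finset (Fin r))
    (hmax : ∀ k, IsMaxClique G (C k))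
    (hall : ∀ s : Finset (Fin r), IsMaxClique G s → ∃ k, C k = s)
    (P : Matrix (Fin r) (Fin r) (MvPolynomial (Fin n) ℝ)) (hPsym : P.IsSymm)
    (hPdeg : ∀ i j, (P i j).totalDegree ≤ 2 * d)
    (hPsparse : ∀ i j, ¬ (G.Adj i j ∨ i = j) → P i j = 0) :
    (∃ F : Matrix (Fin r) (Fin r) (MvPolynomial (Fin n) ℝ),
      (∃ (s : ℕ) (M : Matrix (Fin s) (Fin r) (MvPolynomial (Fin n) ℝ)),
        (∀ i j, (M i j).totalDegree ≤ d) ∧ F = Mᵀ * M) ∧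
      ∀ i j, (G.Adj i j ∨ i = j) → F i j = P i j)
    ↔
    ((∀ k, ∃ (s : ℕ)
        (M : Matrix (Fin s) (Fin (C k).card) (MvPolynomial (Fin n) ℝ)),
      (∀ i j, (M i j).totalDegree ≤ d) ∧
        indexMatrix (MvPolynomial (Fin n) ℝ) (C k) * P *
          (indexMatrix (MvPolynomial (Fin n) ℝ) (C k))ᵀ = Mᵀ * M) ∧
    (∃ Qk : (k : Fin t) →
        Matrix (Fin (C k).card × Fin N) (Fin (C k).card × Fin N) ℝ,
      (∀ k, (Qk k).PosSemidef) ∧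
      (∀ k, indexMatrix (MvPolynomial (Fin n) ℝ) (C k) * P *
          (indexMatrix (MvPolynomial (Fin n) ℝ) (C k))ᵀ =
        ((idKronV (C k).card v)ᵀ * (Qk k).map (fun a => MvPolynomial.C a) : Matrix _ _ _) *
          idKronV (C k).card v) ∧
      (∀ k l : Fin t, ∀ i j : Fin r,
        i ∈ C k ∩ C l → j ∈ C k ∩ C l → ∀ a b : Fin N,
          ((hyperIndexMatrix ℝ N (C k))ᵀ * Qk k * hyperIndexMatrix ℝ N (C k))
              (i, a) (j, b) =
            ((hyperIndexMatrix ℝ N (C l))ᵀ * Qk l * hyperIndexMatrix ℝ N (C l))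
              (i, a) (j, b)))) := by
  
  classical
  obtain ⟨m, hminj, hmdeg, hmsurj, hvm⟩ := hv
  -- cliques extend to maximal cliques
  have hextend : ∀ ss : Finset (Fin r), G.IsClique ↑ss → ss.Nonempty →
      ∃ k : Fin t, ss ⊆ C k := by
    intro ss hss hne
    have hcand : ∃ T : Finset (Fin r), ss ⊆ T ∧ IsMaxClique G T := by
      obtain ⟨T, hT, hTmax⟩ := Finset.exists_max_image
        (Finset.univ.powerset.filter (fun u : Finset (Fin r) => G.IsClique (↑u : Set (Fin r)) ∧ ss ⊆ u)) Finset.card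
        ⟨ss, by
          rw [Finset.mem_filter]
          exact ⟨Finset.mem_powerset.mpr (Finset.subset_univ _), hss, le_refl _⟩⟩
      rw [Finset.mem_filter] at hT
      refine ⟨T, hT.2.2, hT.2.1, ?_⟩
      intro u hu hTu
      have hmem : u ∈ Finset.univ.powerset.filter (fun u : Finset (Fin r) => G.IsClique (↑u : Set (Fin r)) ∧ ss ⊆ u) := by
        rw [Finset.mem_filter]
        exact ⟨Finset.mem_powerset.mpr (Finset.subset_univ _), hu, hT.2.2.trans hTu⟩
      exact Finset.eq_of_subset_of_card_le hTu (hTmax u hmem)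
    obtain ⟨T, hsub, hmaxT⟩ := hcand
    obtain ⟨k, rfl⟩ := hall T hmaxT
    exact ⟨k, hsub⟩
  have hpairclique : ∀ i j : Fin r, (G.Adj i j ∨ i = j) →
      ∃ k : Fin t, i ∈ C k ∧ j ∈ C k := by
    intro i j hij
    have hclq : G.IsClique ↑({i, j} : Finset (Fin r)) := by
      intro x hx y hy hxy
      simp only [Finset.coe_insert, Finset.coe_singleton, Set.mem_insert_iff,
        Set.mem_singleton_iff] at hx hy
      rcases hij with hadj | rfl
      · rcases hx with rfl | rfl <;> rcases hy with rfl | rfl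
        · exact absurd rfl hxy
        · exact hadj
        · exact hadj.symm
        · exact absurd rfl hxy
      · rcases hx with rfl | rfl <;> rcases hy with rfl | rfl <;> exact absurd rfl hxy
    obtain ⟨k, hk⟩ := hextend {i, j} hclq ⟨i, by simp⟩
    exact ⟨k, hk (by simp), hk (by simp)⟩
  have hCadj : ∀ (k : Fin t) (x y : Fin r), x ∈ C k → y ∈ C k →
      (G.Adj x y ∨ x = y) := by
    intro k x y hx hy
    by_cases h : x = y
    · exact Or.inr h
    · exact Or.inl ((hmax k).1 hx hy h)
  constructor
  · -- forward direction
    rintro ⟨F, ⟨s, M, hMdeg, hFM⟩, hFP⟩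
    constructor
    · -- (i) every clique submatrix is SOS
      intro k
      refine ⟨s, M * (indexMatrix (MvPolynomial (Fin n) ℝ) (C k))ᵀ, ?_, ?_⟩
      · intro i p
        rw [mul_indexMatrix_transpose]
        exact hMdeg _ _
      · refine Matrix.ext fun p q => ?_
        rw [EPEt_apply]
        have hmem1 := (cliqueIso (C k) p).2
        have hmem2 := (cliqueIso (C k) q).2
        rw [← hFP _ _ (hCadj k _ _ hmem1 hmem2), hFM]
        rw [Matrix.mul_apply, Matrix.mul_apply]
        refine Finset.sum_congr rfl fun i _ => ?_
        rw [Matrix.transpose_apply, Matrix.transpose_apply,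
          mul_indexMatrix_transpose, mul_indexMatrix_transpose]
    · -- (ii) consistent PSD Gram matrices
      set c : Fin s → (Fin r × Fin N) → ℝ :=
        fun s' p => (M s' p.1).coeff (m p.2) with hc
      set Qfull : Matrix (Fin r × Fin N) (Fin r × Fin N) ℝ :=
        Matrix.of (fun p q => ∑ s' : Fin s, c s' p * c s' q) with hQfull
      set QQ : (k : Fin t) →
          Matrix (Fin (C k).card × Fin N) (Fin (C k).card × Fin N) ℝ :=
        fun k => Matrix.of (fun p q =>
          Qfull ((cliqueIso (C k) p.1 : Fin r), p.2)
            ((cliqueIso (C k) q.1 : Fin r), q.2)) with hQQ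
      refine ⟨QQ, ?_, ?_, ?_⟩
      · -- PSD
        intro k
        simp only [hQQ]
        have hfact : (Matrix.of (fun p q =>
            Qfull ((cliqueIso (C k) p.1 : Fin r), p.2)
              ((cliqueIso (C k) q.1 : Fin r), q.2)) :
              Matrix (Fin (C k).card × Fin N) (Fin (C k).card × Fin N) ℝ)
            = (Matrix.of (fun (s' : Fin s) (p : Fin (C k).card × Fin N) =>
                c s' ((cliqueIso (C k) p.1 : Fin r), p.2)))ᴴ *
              (Matrix.of (fun (s' : Fin s) (p : Fin (C k).card × Fin N) =>
                c s' ((cliqueIso (C k) p.1 : Fin r), p.2))) := by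
          ext p q
          rw [Matrix.mul_apply]
          simp only [Matrix.conjTranspose_apply, Matrix.of_apply, star_trivial, hQfull]
        rw [hfact]
        exact Matrix.posSemidef_conjTranspose_mul_self _
      · -- Gram identity
        intro k
        simp only [hQQ]
        refine Matrix.ext fun p q => ?_
        rw [EPEt_apply, idKronV_gram_entry']
        simp only [Matrix.of_apply]
        have hmem1 := (cliqueIso (C k) p).2
        have hmem2 := (cliqueIso (C k) q).2
        rw [← hFP _ _ (hCadj k _ _ hmem1 hmem2), hFM]
        rw [Matrix.mul_apply]
        have hexp : ∀ (s' : Fin s) (i : Fin r),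
            M s' i = ∑ a : Fin N, MvPolynomial.C (c s' (i, a)) * v a :=
          fun s' i => ChordalAux.basis_expansion hminj hmsurj hvm _ (hMdeg s' i)
        calc
          ∑ s' : Fin s, Mᵀ (cliqueIso (C k) p : Fin r) s' * M s' (cliqueIso (C k) q : Fin r)
              = ∑ s' : Fin s, ∑ a : Fin N, ∑ b : Fin N,
                  MvPolynomial.C (c s' ((cliqueIso (C k) p : Fin r), a) *
                    c s' ((cliqueIso (C k) q : Fin r), b)) * (v a * v b) := by
                refine Finset.sum_congr rfl fun s' _ => ?_
                rw [Matrix.transpose_apply, hexp s', hexp s', ChordalAux.expand_mul]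
          _ = ∑ a : Fin N, ∑ b : Fin N, ∑ s' : Fin s,
                  MvPolynomial.C (c s' ((cliqueIso (C k) p : Fin r), a) *
                    c s' ((cliqueIso (C k) q : Fin r), b)) * (v a * v b) := by
                rw [Finset.sum_comm]
                refine Finset.sum_congr rfl fun a _ => ?_
                rw [Finset.sum_comm]
          _ = ∑ a : Fin N, ∑ b : Fin N,
                MvPolynomial.C (Qfull ((cliqueIso (C k) p : Fin r), a)
                  ((cliqueIso (C k) q : Fin r), b)) * (v a * v b) := by
                refine Finset.sum_congr rfl fun a _ => Finset.sum_congr rfl fun b _ => ?_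
                rw [← Finset.sum_mul, ← map_sum]
                rw [hQfull]
                simp only [Matrix.of_apply]
      · -- consistency
        intro k l i j hikl hjkl a b
        have hik : i ∈ C k := (Finset.mem_inter.mp hikl).1
        have hil : i ∈ C l := (Finset.mem_inter.mp hikl).2
        have hjk : j ∈ C k := (Finset.mem_inter.mp hjkl).1
        have hjl : j ∈ C l := (Finset.mem_inter.mp hjkl).2
        simp only [hQQ]
        rw [inflation_apply_mem (C k) _ hik hjk a b,
          inflation_apply_mem (C l) _ hil hjl a b]
        simp only [Matrix.of_apply, OrderIso.apply_symm_apply]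
  · -- backward direction
    rintro ⟨hSOScliques, ⟨Qk, hQkpsd, hQkgram, hQkcons⟩⟩
    have hQksym : ∀ (k : Fin t) p q, Qk k p q = Qk k q p := by
      intro k p q
      have := congrFun (congrFun (hQkpsd k).1 q) p
      simpa [Matrix.conjTranspose_apply] using this
    set W : Matrix (Fin r × Fin N) (Fin r × Fin N) ℝ := Matrix.of (fun p q =>
      if h : ∃ k, p.1 ∈ C k ∧ q.1 ∈ C k then
        ((hyperIndexMatrix ℝ N (C h.choose))ᵀ * Qk h.choose *
          hyperIndexMatrix ℝ N (C h.choose)) p q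
      else 0) with hWdef
    have hWval : ∀ (k : Fin t) (i j : Fin r) (hi : i ∈ C k) (hj : j ∈ C k) (a b : Fin N),
        W (i, a) (j, b) = Qk k ((cliqueIso (C k)).symm ⟨i, hi⟩, a)
          ((cliqueIso (C k)).symm ⟨j, hj⟩, b) := by
      intro k i j hi hj a b
      rw [hWdef]
      simp only [Matrix.of_apply]
      have hex : ∃ k', i ∈ C k' ∧ j ∈ C k' := ⟨k, hi, hj⟩
      rw [dif_pos hex]
      have hspec := hex.choose_spec
      rw [hQkcons hex.choose k i j
        (Finset.mem_inter.mpr ⟨hspec.1, hi⟩) (Finset.mem_inter.mpr ⟨hspec.2, hj⟩) a b,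
        inflation_apply_mem (C k) (Qk k) hi hj a b]
    -- the partial matrix is PSD on products of cliques
    have hcl : ∀ ss : Finset (Fin r), G.IsClique ↑ss →
        SubPSD (ss ×ˢ (Finset.univ : Finset (Fin N))) W := by
      intro ss hss
      by_cases hempty : ss.Nonempty
      swap
      · constructor
        · intro p hp
          exfalso
          rw [Finset.mem_product] at hp
          exact hempty ⟨p.1, hp.1⟩
        · intro x hx
          have hx0 : x = 0 := by
            funext p
            apply hx
            rw [Finset.mem_product]
            intro hmem
            exact hempty ⟨p.1, hmem.1⟩
          rw [hx0]
          simp [dotProduct]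
      obtain ⟨k, hsub⟩ := hextend ss hss hempty
      constructor
      · -- symmetry on the block
        intro p hp q hq
        rw [Finset.mem_product] at hp hq
        have hp1 : p.1 ∈ C k := hsub hp.1
        have hq1 : q.1 ∈ C k := hsub hq.1
        calc W q p = Qk k ((cliqueIso (C k)).symm ⟨q.1, hq1⟩, q.2)
              ((cliqueIso (C k)).symm ⟨p.1, hp1⟩, p.2) :=
            hWval k q.1 p.1 hq1 hp1 q.2 p.2
          _ = Qk k ((cliqueIso (C k)).symm ⟨p.1, hp1⟩, p.2)
              ((cliqueIso (C k)).symm ⟨q.1, hq1⟩, q.2) := hQksym k _ _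
          _ = W p q := (hWval k p.1 q.1 hp1 hq1 p.2 q.2).symm
      · -- quadratic form
        intro x hx
        set y : Fin (C k).card × Fin N → ℝ :=
          fun p => x ((cliqueIso (C k) p.1 : Fin r), p.2) with hy
        have hxz : ∀ i : Fin r, i ∉ C k → ∀ a : Fin N, x (i, a) = 0 := by
          intro i hi a
          apply hx
          rw [Finset.mem_product]
          intro hmem
          exact hi (hsub hmem.1)
        have hsum : ∀ f : Fin r → ℝ, (∀ i, i ∉ C k → f i = 0) →
            ∑ i : Fin r, f i = ∑ p : Fin (C k).card, f (cliqueIso (C k) p : Fin r) := by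
          intro f hf
          rw [← Finset.sum_subset (Finset.subset_univ (C k))
            (fun i _ hi => hf i hi)]
          rw [← Finset.sum_coe_sort (C k) f]
          exact (Fintype.sum_equiv (cliqueIso (C k)).toEquiv
            (fun p => f (cliqueIso (C k) p : Fin r)) (fun i => f ↑i) (fun p => rfl)).symm
        have hkey : x ⬝ᵥ W.mulVec x = y ⬝ᵥ (Qk k).mulVec y := by
          simp only [dotProduct, Matrix.mulVec, Fintype.sum_prod_type]
          rw [hsum _ (by
            intro i hi
            apply Finset.sum_eq_zero
            intro a _
            rw [hxz i hi a, zero_mul])]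
          refine Finset.sum_congr rfl fun p _ => Finset.sum_congr rfl fun a _ => ?_
          congr 1
          rw [hsum _ (by
            intro j hj
            apply Finset.sum_eq_zero
            intro b _
            rw [hxz j hj b, mul_zero])]
          refine Finset.sum_congr rfl fun q _ => Finset.sum_congr rfl fun b _ => ?_
          congr 1
          have hWv := hWval k (cliqueIso (C k) p : Fin r) (cliqueIso (C k) q : Fin r)
            (cliqueIso (C k) p).2 (cliqueIso (C k) q).2 a b
          have h1 : ((cliqueIso (C k)).symm ⟨(cliqueIso (C k) p : Fin r),
              (cliqueIso (C k) p).2⟩) = p := by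
            rw [show (⟨(cliqueIso (C k) p : Fin r), (cliqueIso (C k) p).2⟩ :
                {x // x ∈ C k}) = cliqueIso (C k) p from Subtype.ext rfl,
              OrderIso.symm_apply_apply]
          have h2 : ((cliqueIso (C k)).symm ⟨(cliqueIso (C k) q : Fin r),
              (cliqueIso (C k) q).2⟩) = q := by
            rw [show (⟨(cliqueIso (C k) q : Fin r), (cliqueIso (C k) q).2⟩ :
                {x // x ∈ C k}) = cliqueIso (C k) q from Subtype.ext rfl,
              OrderIso.symm_apply_apply]
          rw [hWv, h1, h2]
        rw [hkey]
        have := (hQkpsd k).dotProduct_mulVec_nonneg y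
        simpa using this
    obtain ⟨Q, hQpsd, hQW⟩ := ChordalAux.chordal_completion (Fintype.card (Fin r))
      (Fin r) inferInstance (Fin N) inferInstance G le_rfl hchordal W hcl
    obtain ⟨Bm, hBm⟩ := psd_eq_conjTranspose_mul_self_aux hQpsd
    set M : Matrix (Fin (r * N)) (Fin r) (MvPolynomial (Fin n) ℝ) :=
      Matrix.of (fun k' j => ∑ b : Fin N,
        MvPolynomial.C (Bm (finProdFinEquiv.symm k') (j, b)) * v b) with hMdef
    refine ⟨Mᵀ * M, ⟨r * N, M, ?_, rfl⟩, ?_⟩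
    · intro i j
      simp only [hMdef, Matrix.of_apply]
      refine le_trans (MvPolynomial.totalDegree_finset_sum _ _) ?_
      apply Finset.sup_le
      intro b _
      refine le_trans (MvPolynomial.totalDegree_mul _ _) ?_
      rw [MvPolynomial.totalDegree_C, zero_add]
      exact ChordalAux.vdeg hmdeg hvm b
    · intro i j hij
      have hentry : (Mᵀ * M) i j = ∑ a : Fin N, ∑ b : Fin N,
          MvPolynomial.C (Q (i, a) (j, b)) * (v a * v b) := by
        rw [Matrix.mul_apply]
        calc
          ∑ k' : Fin (r * N), Mᵀ i k' * M k' j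
              = ∑ k' : Fin (r * N), ∑ a : Fin N, ∑ b : Fin N,
                  MvPolynomial.C (Bm (finProdFinEquiv.symm k') (i, a) *
                    Bm (finProdFinEquiv.symm k') (j, b)) * (v a * v b) := by
                refine Finset.sum_congr rfl fun k' _ => ?_
                rw [Matrix.transpose_apply]
                simp only [hMdef, Matrix.of_apply]
                rw [ChordalAux.expand_mul]
          _ = ∑ p : Fin r × Fin N, ∑ a : Fin N, ∑ b : Fin N,
                  MvPolynomial.C (Bm p (i, a) * Bm p (j, b)) * (v a * v b) := by
                exact Fintype.sum_equiv finProdFinEquiv.symm _ _ (fun k' => rfl)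
          _ = ∑ a : Fin N, ∑ b : Fin N,
                  MvPolynomial.C (∑ p : Fin r × Fin N, Bm p (i, a) * Bm p (j, b)) *
                    (v a * v b) := by
                rw [Finset.sum_comm]
                refine Finset.sum_congr rfl fun a _ => ?_
                rw [Finset.sum_comm]
                refine Finset.sum_congr rfl fun b _ => ?_
                rw [← Finset.sum_mul, ← map_sum]
          _ = ∑ a : Fin N, ∑ b : Fin N,
                  MvPolynomial.C (Q (i, a) (j, b)) * (v a * v b) := by
                refine Finset.sum_congr rfl fun a _ => Finset.sum_congr rfl fun b _ => ?_
                have : Q (i, a) (j, b) = ∑ p : Fin r × Fin N, Bm p (i, a) * Bm p (j, b) := by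
                  rw [hBm, Matrix.mul_apply]
                  refine Finset.sum_congr rfl fun p _ => ?_
                  rw [Matrix.conjTranspose_apply, star_trivial]
                rw [this]
      rw [hentry]
      obtain ⟨k, hik, hjk⟩ := hpairclique i j hij
      have hgram := congrFun (congrFun (hQkgram k) ((cliqueIso (C k)).symm ⟨i, hik⟩))
        ((cliqueIso (C k)).symm ⟨j, hjk⟩)
      rw [EPEt_apply, idKronV_gram_entry'] at hgram
      simp only [OrderIso.apply_symm_apply] at hgram
      have hQval : ∀ a b : Fin N, Q (i, a) (j, b)
          = Qk k ((cliqueIso (C k)).symm ⟨i, hik⟩, a) ((cliqueIso (C k)).symm ⟨j, hjk⟩, b) := by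
        intro a b
        rw [hQW i j hij a b]
        exact hWval k i j hik hjk a b
      rw [Finset.sum_congr rfl (fun a _ => Finset.sum_congr rfl
        (fun b _ => by rw [hQval a b]))]
      exact hgram.symm
end
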